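/- Let p = 7·log n/(8n). Then, almost surely, the random digraph D = D(n,p) has the following property, where S = {v ∈ [n] : d^+_D(v) < log n/20 or d^−_D(v) < log n/20}: there are no S-paths and no S-cycles in D, and |S| ≤ n^{1/3}. -/

import Mathlib

open Finset

/-- The type of directed edges (ordered pairs of distinct vertices) on `Fin n`. -/
abbrev Eg (n : ℕ) := {p : Fin n × Fin n // p.1 ≠ p.2}

/-- `drel D u v` means the directed edge from `u` to `v` belongs to the digraph `D`. -/
def drel {n : ℕ} (D : Finset (Eg n)) (u v : Fin n) : Prop :=
  ∃ h : u ≠ v, (⟨(u, v), h⟩ : Eg n) ∈ D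

/-- The out-degree of a vertex. -/
noncomputable def outdeg {n : ℕ} (D : Finset (Eg n)) (v : Fin n) : ℕ :=
  {w | drel D v w}.ncard

/-- The in-degree of a vertex. -/
noncomputable def indeg {n : ℕ} (D : Finset (Eg n)) (v : Fin n) : ℕ :=
  {w | drel D w v}.ncard

/-- The number of out-neighbours of `v` lying in `B`. -/
noncomputable def outdegIn {n : ℕ} (D : Finset (Eg n)) (v : Fin n) (B : Set (Fin n)) : ℕ :=
  {w ∈ B | drel D v w}.ncard

/-- The number of in-neighbours of `v` lying in `B`. -/
noncomputable def indegIn {n : ℕ} (D : Finset (Eg n)) (v : Fin n) (B : Set (Fin n)) : ℕ :=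
  {w ∈ B | drel D w v}.ncard

/-- The out-neighbourhood of a set `U` (vertices outside `U` receiving an edge from `U`). -/
def Nout {n : ℕ} (D : Finset (Eg n)) (U : Set (Fin n)) : Set (Fin n) :=
  {w | w ∉ U ∧ ∃ u ∈ U, drel D u w}

/-- The in-neighbourhood of a set `U` (vertices outside `U` sending an edge to `U`). -/
def Nin {n : ℕ} (D : Finset (Eg n)) (U : Set (Fin n)) : Set (Fin n) :=
  {w | w ∉ U ∧ ∃ u ∈ U, drel D w u}

/-- `l` is (the cyclic vertex sequence of) a directed cycle in the digraph `D`. -/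
def IsDiCycle {n : ℕ} (D : Finset (Eg n)) (l : List (Fin n)) : Prop :=
  2 ≤ l.length ∧ l.Nodup ∧ ∀ h : l ≠ [], List.Chain' (drel D) (l ++ [l.head h])

/-- A digraph is Hamiltonian if it contains a directed cycle through every vertex. -/
def Hamiltonian {n : ℕ} (D : Finset (Eg n)) : Prop :=
  ∃ l : List (Fin n), IsDiCycle D l ∧ ∀ v : Fin n, v ∈ l

open scoped Classical in
/-- The probability that the binomial random digraph `D(n,p)` (each of the `n(n-1)` possible
directed edges present independently with probability `p`) satisfies the property `P`. -/
noncomputable def dnpProb (n : ℕ) (p : ℝ) (P : Finset (Eg n) → Prop) : ℝ :=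
  ∑ D : Finset (Eg n),
    if P D then p ^ D.card * (1 - p) ^ (Fintype.card (Eg n) - D.card) else 0

/-- `e^+(A,B)`: the number of edges of `D` directed from `A` to `B`. -/
noncomputable def eOut {n : ℕ} (D : Finset (Eg n)) (A B : Set (Fin n)) : ℕ :=
  {e : Eg n | e ∈ D ∧ e.1.1 ∈ A ∧ e.1.2 ∈ B}.ncard

/-- The underlying (undirected) adjacency of a digraph. -/
def urel {n : ℕ} (D : Finset (Eg n)) (u v : Fin n) : Prop := drel D u v ∨ drel D v u

/-- An `S`-path: a path of length at most 4 in `D` (edges in any orientation) starting and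
ending at distinct vertices of `S`. -/
def IsSPath {n : ℕ} (D : Finset (Eg n)) (S : Set (Fin n)) (l : List (Fin n)) : Prop :=
  l.Nodup ∧ 2 ≤ l.length ∧ l.length ≤ 5 ∧ List.Chain' (urel D) l ∧
    ∀ h : l ≠ [], l.head h ∈ S ∧ l.getLast h ∈ S

/-- An `S`-cycle: a cycle of length at most 4 in `D` (edges in any orientation; a cycle of
length 2 consisting of two distinct oppositely-directed edges is permitted) containing a vertex
of `S`. -/
def IsSCycle {n : ℕ} (D : Finset (Eg n)) (S : Set (Fin n)) (l : List (Fin n)) : Prop :=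
  l.Nodup ∧ (∃ v ∈ l, v ∈ S) ∧
    ((∃ a b : Fin n, l = [a, b] ∧ drel D a b ∧ drel D b a) ∨
      (3 ≤ l.length ∧ l.length ≤ 4 ∧
        ∀ h : l ≠ [], List.Chain' (urel D) (l ++ [l.head h])))

/-- The set of vertices of small in- or out-degree. -/
noncomputable def lowSet (n : ℕ) (D : Finset (Eg n)) : Set (Fin n) :=
  {v | (outdeg D v : ℝ) < Real.log n / 20 ∨ (indeg D v : ℝ) < Real.log n / 20}


/-! ### Probability core -/

section ProbCore

open scoped Classical in
/-- Probability, restricted to ground set `U`, that a random subset (each element present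
independently with probability `p`) satisfies `Q`. -/
noncomputable def PrOn (n : ℕ) (p : ℝ) (U : Finset (Eg n)) (Q : Finset (Eg n) → Prop) : ℝ :=
  ∑ A ∈ U.powerset, if Q A then p ^ A.card * (1 - p) ^ (U.card - A.card) else 0

variable {n : ℕ} {p : ℝ}

lemma dnpProb_eq_PrOn (P : Finset (Eg n) → Prop) : dnpProb n p P = PrOn n p univ P := by
  classical
  rw [dnpProb, PrOn, Finset.powerset_univ]
  exact Finset.sum_congr rfl fun A _ => by rw [Finset.card_univ]

lemma prw_nonneg (h0 : 0 ≤ p) (h1 : p ≤ 1) (a b : ℕ) : (0:ℝ) ≤ p ^ a * (1 - p) ^ b :=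
  mul_nonneg (pow_nonneg h0 _) (pow_nonneg (by linarith) _)

lemma PrOn_nonneg (h0 : 0 ≤ p) (h1 : p ≤ 1) (U : Finset (Eg n)) (Q : Finset (Eg n) → Prop) :
    0 ≤ PrOn n p U Q := by
  classical
  refine Finset.sum_nonneg fun A _ => ?_
  split
  · exact prw_nonneg h0 h1 _ _
  · exact le_rfl

lemma PrOn_congr {U : Finset (Eg n)} {Q R : Finset (Eg n) → Prop}
    (h : ∀ A ∈ U.powerset, (Q A ↔ R A)) : PrOn n p U Q = PrOn n p U R := by
  classical
  refine Finset.sum_congr rfl fun A hA => ?_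
  rw [if_congr (h A hA) rfl rfl]

lemma PrOn_true (U : Finset (Eg n)) : PrOn n p U (fun _ => True) = 1 := by
  classical
  have h := Finset.prod_add (fun _ : Eg n => p) (fun _ => 1 - p) U
  simp only [Finset.prod_const, add_sub_cancel, one_pow] at h
  rw [PrOn]
  simp only [if_true]
  have h2 : ∑ A ∈ U.powerset, p ^ A.card * (1 - p) ^ (U.card - A.card)
      = ∑ A ∈ U.powerset, p ^ A.card * (1 - p) ^ (U \ A).card :=
    Finset.sum_congr rfl fun A hA => by rw [Finset.card_sdiff_of_subset (Finset.mem_powerset.1 hA)]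
  rw [h2, ← h]

lemma PrOn_mono (h0 : 0 ≤ p) (h1 : p ≤ 1) {U : Finset (Eg n)} {Q R : Finset (Eg n) → Prop}
    (h : ∀ A ∈ U.powerset, Q A → R A) : PrOn n p U Q ≤ PrOn n p U R := by
  classical
  refine Finset.sum_le_sum fun A hA => ?_
  by_cases hq : Q A
  · rw [if_pos hq, if_pos (h A hA hq)]
  · rw [if_neg hq]
    split
    · exact prw_nonneg h0 h1 _ _
    · exact le_rfl

lemma PrOn_le_one (h0 : 0 ≤ p) (h1 : p ≤ 1) (U : Finset (Eg n)) (Q : Finset (Eg n) → Prop) :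
    PrOn n p U Q ≤ 1 := by
  rw [← PrOn_true (p := p) U]
  exact PrOn_mono h0 h1 fun A _ _ => trivial

lemma PrOn_add_compl (U : Finset (Eg n)) (Q : Finset (Eg n) → Prop) :
    PrOn n p U Q + PrOn n p U (fun A => ¬ Q A) = 1 := by
  classical
  rw [← PrOn_true (p := p) U, PrOn, PrOn, PrOn, ← Finset.sum_add_distrib]
  refine Finset.sum_congr rfl fun A hA => ?_
  by_cases hq : Q A <;> simp [hq]

open scoped Classical in
/-- Markov/union-bound style counting estimate. -/
lemma PrOn_count {ι : Type*} (h0 : 0 ≤ p) (h1 : p ≤ 1) {U : Finset (Eg n)}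
    (s : Finset ι) (R : ι → Finset (Eg n) → Prop) (Q : Finset (Eg n) → Prop) (t : ℝ)
    (h : ∀ A ∈ U.powerset, Q A → t ≤ ((s.filter (fun i => R i A)).card : ℝ)) :
    t * PrOn n p U Q ≤ ∑ i ∈ s, PrOn n p U (R i) := by
  classical
  rw [PrOn, Finset.mul_sum]
  have hswap : ∑ i ∈ s, PrOn n p U (R i)
      = ∑ A ∈ U.powerset, ∑ i ∈ s,
          (if R i A then p ^ A.card * (1 - p) ^ (U.card - A.card) else 0) := by
    rw [Finset.sum_comm]
    rfl
  rw [hswap]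
  refine Finset.sum_le_sum fun A hA => ?_
  have hw : (0:ℝ) ≤ p ^ A.card * (1 - p) ^ (U.card - A.card) := prw_nonneg h0 h1 _ _
  rw [← Finset.sum_filter, Finset.sum_const, nsmul_eq_mul]
  by_cases hq : Q A
  · rw [if_pos hq]
    exact mul_le_mul_of_nonneg_right (h A hA hq) hw
  · rw [if_neg hq, mul_zero]
    positivity

lemma PrOn_union_bound {ι : Type*} (h0 : 0 ≤ p) (h1 : p ≤ 1) {U : Finset (Eg n)}
    (s : Finset ι) (R : ι → Finset (Eg n) → Prop) (Q : Finset (Eg n) → Prop)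
    (h : ∀ A ∈ U.powerset, Q A → ∃ i ∈ s, R i A) :
    PrOn n p U Q ≤ ∑ i ∈ s, PrOn n p U (R i) := by
  classical
  have := PrOn_count h0 h1 s R Q 1 (fun A hA hQ => by
    obtain ⟨i, hi, hRi⟩ := h A hA hQ
    have : (s.filter (fun i => R i A)).Nonempty := ⟨i, Finset.mem_filter.2 ⟨hi, hRi⟩⟩
    have := Finset.card_pos.2 this
    exact_mod_cast this)
  linarith

lemma PrOn_or_le (h0 : 0 ≤ p) (h1 : p ≤ 1) {U : Finset (Eg n)}
    (Q R : Finset (Eg n) → Prop) :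
    PrOn n p U (fun A => Q A ∨ R A) ≤ PrOn n p U Q + PrOn n p U R := by
  classical
  rw [PrOn, PrOn, PrOn, ← Finset.sum_add_distrib]
  refine Finset.sum_le_sum fun A hA => ?_
  have hw : (0:ℝ) ≤ p ^ A.card * (1 - p) ^ (U.card - A.card) := prw_nonneg h0 h1 _ _
  by_cases hq : Q A <;> by_cases hr : R A <;> simp [hq, hr] <;> linarith

lemma PrOn_split {T V : Finset (Eg n)} (hTV : Disjoint T V)
    (Q R : Finset (Eg n) → Prop) :
    PrOn n p (T ∪ V) (fun A => Q (A ∩ T) ∧ R (A ∩ V)) = PrOn n p T Q * PrOn n p V R := by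
  classical
  rw [PrOn, PrOn, PrOn, Finset.sum_mul_sum, Finset.card_union_of_disjoint hTV,
    ← Finset.sum_product']
  refine Finset.sum_nbij' (fun A => (A ∩ T, A ∩ V)) (fun BC => BC.1 ∪ BC.2) ?_ ?_ ?_ ?_ ?_
  · intro A hA
    simp only [Finset.mem_product, Finset.mem_powerset]
    exact ⟨Finset.inter_subset_right, Finset.inter_subset_right⟩
  · intro BC hBC
    simp only [Finset.mem_product, Finset.mem_powerset] at hBC
    exact Finset.mem_powerset.2 (Finset.union_subset_union hBC.1 hBC.2)
  · intro A hA
    have hA' := Finset.mem_powerset.1 hA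
    simp only
    rw [← Finset.inter_union_distrib_left, Finset.inter_eq_left.2 hA']
  · intro BC hBC
    simp only [Finset.mem_product, Finset.mem_powerset] at hBC
    have h1 : BC.1 ∩ T = BC.1 := Finset.inter_eq_left.2 hBC.1
    have h2 : BC.2 ∩ V = BC.2 := Finset.inter_eq_left.2 hBC.2
    have h3 : BC.2 ∩ T = ∅ := Finset.disjoint_iff_inter_eq_empty.1
      (Finset.disjoint_of_subset_left hBC.2 hTV.symm)
    have h4 : BC.1 ∩ V = ∅ := Finset.disjoint_iff_inter_eq_empty.1
      (Finset.disjoint_of_subset_left hBC.1 hTV)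
    ext <;> simp only [Finset.union_inter_distrib_right, h1, h2, h3, h4,
      Finset.union_empty, Finset.empty_union]
  · intro A hA
    have hA' := Finset.mem_powerset.1 hA
    have hcard : A.card = (A ∩ T).card + (A ∩ V).card := by
      rw [← Finset.card_union_of_disjoint
        (Finset.disjoint_of_subset_left Finset.inter_subset_right
          (Finset.disjoint_of_subset_right Finset.inter_subset_right hTV))]
      rw [← Finset.inter_union_distrib_left, Finset.inter_eq_left.2 hA']
    have hT : (A ∩ T).card ≤ T.card := Finset.card_le_card Finset.inter_subset_right
    have hV : (A ∩ V).card ≤ V.card := Finset.card_le_card Finset.inter_subset_right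
    dsimp only
    by_cases hq : Q (A ∩ T)
    · by_cases hr : R (A ∩ V)
      · rw [if_pos (show Q (A ∩ T) ∧ R (A ∩ V) from ⟨hq, hr⟩), if_pos hq, if_pos hr,
          hcard, pow_add,
          show T.card + V.card - ((A ∩ T).card + (A ∩ V).card)
            = (T.card - (A ∩ T).card) + (V.card - (A ∩ V).card) from by omega, pow_add]
        ring
      · rw [if_neg (show ¬ (Q (A ∩ T) ∧ R (A ∩ V)) from by tauto), if_neg hr, mul_zero]
    · rw [if_neg (show ¬ (Q (A ∩ T) ∧ R (A ∩ V)) from by tauto), if_neg hq, zero_mul]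

lemma PrOn_split' {U T : Finset (Eg n)} (hT : T ⊆ U) (Q R : Finset (Eg n) → Prop) :
    PrOn n p U (fun A => Q (A ∩ T) ∧ R (A ∩ (U \ T)))
      = PrOn n p T Q * PrOn n p (U \ T) R := by
  obtain ⟨V, hV⟩ : ∃ V, U \ T = V := ⟨_, rfl⟩
  rw [hV, show U = T ∪ V from by rw [← hV, Finset.union_sdiff_of_subset hT]]
  exact PrOn_split (by rw [← hV]; exact Finset.disjoint_sdiff) Q R

lemma PrOn_restrict (h0 : 0 ≤ p) (h1 : p ≤ 1) {U T : Finset (Eg n)} (hT : T ⊆ U)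
    (Q : Finset (Eg n) → Prop) :
    PrOn n p U (fun A => Q (A ∩ T)) ≤ PrOn n p T Q := by
  calc PrOn n p U (fun A => Q (A ∩ T))
      = PrOn n p U (fun A => Q (A ∩ T) ∧ (fun _ => True) (A ∩ (U \ T))) := by
        exact PrOn_congr fun A _ => by simp
    _ = PrOn n p T Q * PrOn n p (U \ T) (fun _ => True) := PrOn_split' hT Q (fun _ => True)
    _ ≤ PrOn n p T Q := le_of_eq (by rw [PrOn_true, mul_one])

lemma PrOn_prod_le {ι : Type*} [DecidableEq ι] (h0 : 0 ≤ p) (h1 : p ≤ 1)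
    (s : Finset ι) (T : ι → Finset (Eg n)) (Q : ι → Finset (Eg n) → Prop) :
    ∀ (U : Finset (Eg n)), (∀ i ∈ s, T i ⊆ U) →
    ((s : Set ι).Pairwise fun i j => Disjoint (T i) (T j)) →
    PrOn n p U (fun A => ∀ i ∈ s, Q i (A ∩ T i)) ≤ ∏ i ∈ s, PrOn n p (T i) (Q i) := by
  classical
  induction s using Finset.cons_induction with
  | empty =>
    intro U _ _
    rw [Finset.prod_empty]
    refine le_of_eq ?_
    rw [show (fun A : Finset (Eg n) => ∀ i ∈ (∅ : Finset ι), Q i (A ∩ T i))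
      = (fun _ => True) from by funext A; simp]
    exact PrOn_true U
  | cons a s ha ih =>
    intro U hU hd
    have hTa : T a ⊆ U := hU a (Finset.mem_cons_self a s)
    have hsub : ∀ i ∈ s, T i ⊆ U \ T a := by
      intro i hi
      refine Finset.subset_sdiff.2 ⟨hU i (Finset.mem_cons.2 (Or.inr hi)), ?_⟩
      have hne : i ≠ a := fun h => ha (h ▸ hi)
      exact hd (by simp [hi]) (by simp) hne
    have key : ∀ A ∈ U.powerset, (∀ i ∈ Finset.cons a s ha, Q i (A ∩ T i)) →
        (Q a (A ∩ T a) ∧ (fun B => ∀ i ∈ s, Q i (B ∩ T i)) (A ∩ (U \ T a))) := by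
      intro A hA h
      refine ⟨h a (Finset.mem_cons_self a s), fun i hi => ?_⟩
      have heq : (A ∩ (U \ T a)) ∩ T i = A ∩ T i := by
        have h1 := hsub i hi
        ext e
        simp only [Finset.mem_inter, Finset.mem_sdiff]
        constructor
        · tauto
        · intro ⟨he1, he2⟩
          have := h1 he2
          rw [Finset.mem_sdiff] at this
          tauto
      rw [heq]
      exact h i (Finset.mem_cons.2 (Or.inr hi))
    calc PrOn n p U (fun A => ∀ i ∈ Finset.cons a s ha, Q i (A ∩ T i))
        ≤ PrOn n p U (fun A => Q a (A ∩ T a)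
            ∧ (fun B => ∀ i ∈ s, Q i (B ∩ T i)) (A ∩ (U \ T a))) :=
          PrOn_mono h0 h1 key
      _ = PrOn n p (T a) (Q a) * PrOn n p (U \ T a) (fun B => ∀ i ∈ s, Q i (B ∩ T i)) :=
          PrOn_split' hTa (Q a) (fun B => ∀ i ∈ s, Q i (B ∩ T i))
      _ ≤ PrOn n p (T a) (Q a) * ∏ i ∈ s, PrOn n p (T i) (Q i) := by
          refine mul_le_mul_of_nonneg_left ?_ (PrOn_nonneg h0 h1 _ _)
          exact ih (U \ T a) hsub (hd.mono (by rw [Finset.coe_cons]; exact Set.subset_insert _ _))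
      _ = ∏ i ∈ Finset.cons a s ha, PrOn n p (T i) (Q i) := (Finset.prod_cons (f := fun i => PrOn n p (T i) (Q i)) ha).symm

lemma PrOn_eq_sum_filter (U : Finset (Eg n)) (Q : Finset (Eg n) → Prop) [DecidablePred Q] :
    PrOn n p U Q = ∑ A ∈ U.powerset.filter Q, p ^ A.card * (1 - p) ^ (U.card - A.card) := by
  rw [PrOn, Finset.sum_filter]
  exact Finset.sum_congr rfl fun A _ => by
    by_cases h : Q A
    · rw [if_pos h, if_pos h]
    · rw [if_neg h, if_neg h]

/-- Lower tail of the binomial distribution. -/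
noncomputable def binTail (p : ℝ) (m K : ℕ) : ℝ :=
  ∑ j ∈ Finset.range (K + 1), (m.choose j : ℝ) * p ^ j * (1 - p) ^ (m - j)

lemma PrOn_card_le (h0 : 0 ≤ p) (h1 : p ≤ 1) (U : Finset (Eg n)) (K : ℕ) :
    PrOn n p U (fun A => A.card ≤ K) ≤ binTail p U.card K := by
  rw [PrOn_eq_sum_filter]
  refine (Finset.sum_le_sum_of_subset_of_nonneg ?_
    (fun A _ _ => prw_nonneg h0 h1 A.card (U.card - A.card))).trans
    (?_ : ∑ A ∈ (Finset.range (K + 1)).biUnion (fun j => U.powersetCard j),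
      p ^ A.card * (1 - p) ^ (U.card - A.card) ≤ binTail p U.card K)
  · intro A hA
    rw [Finset.mem_filter] at hA
    refine Finset.mem_biUnion.2 ⟨A.card, ?_, ?_⟩
    · exact Finset.mem_range.2 (by omega)
    · rw [Finset.mem_powersetCard]
      exact ⟨Finset.mem_powerset.1 hA.1, rfl⟩
  rw [Finset.sum_biUnion]
  · refine le_of_eq (Finset.sum_congr rfl fun j hj => ?_)
    have : ∀ A ∈ U.powersetCard j, p ^ A.card * (1 - p) ^ (U.card - A.card)
        = p ^ j * (1 - p) ^ (U.card - j) := by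
      intro A hA
      rw [(Finset.mem_powersetCard.1 hA).2]
    rw [Finset.sum_congr rfl this, Finset.sum_const, Finset.card_powersetCard,
      nsmul_eq_mul]
    ring
  · intro x hx y hy hxy
    simp only [Finset.coe_range, Set.mem_Iio] at hx hy
    refine Finset.disjoint_left.2 fun A hAx hAy => ?_
    rw [Finset.mem_powersetCard] at hAx hAy
    exact hxy (hAx.2 ▸ hAy.2)

lemma PrOn_nonempty_le (h0 : 0 ≤ p) (h1 : p ≤ 1) {U : Finset (Eg n)} (hU : U.card ≤ 2) :
    PrOn n p U (fun A => A.Nonempty) ≤ 2 * p := by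
  classical
  have hc : PrOn n p U (fun A => ¬ (fun A : Finset (Eg n) => A.Nonempty) A)
      = (1 - p) ^ U.card := by
    rw [PrOn, Finset.sum_eq_single (∅ : Finset (Eg n))]
    · simp
    · intro A hA hne
      rw [if_neg]
      simpa [Finset.nonempty_iff_ne_empty] using hne
    · intro h
      exact absurd (Finset.empty_mem_powerset U) h
  have hcompl := PrOn_add_compl (p := p) U (fun A => A.Nonempty)
  rw [hc] at hcompl
  have hb : 1 + (U.card : ℝ) * (-p) ≤ (1 + (-p)) ^ U.card :=
    one_add_mul_le_pow (by linarith) U.card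
  rw [mul_neg, ← sub_eq_add_neg, ← sub_eq_add_neg] at hb
  have hcard : (U.card : ℝ) ≤ 2 := by exact_mod_cast hU
  have hp2 : (U.card : ℝ) * p ≤ 2 * p := mul_le_mul_of_nonneg_right hcard h0
  linarith

lemma PrOn_eq_full (U : Finset (Eg n)) : PrOn n p U (fun A => A = U) = p ^ U.card := by
  classical
  rw [PrOn, Finset.sum_eq_single U]
  · simp
  · intro A _ hne
    rw [if_neg hne]
  · intro h
    exact absurd (Finset.mem_powerset_self U) h

end ProbCore


/-! ### Edge sets and degree events -/

section GraphEvents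

variable {n : ℕ} {p : ℝ}

/-- Out-edges of `u` avoiding `W`. -/
def TOut (u : Fin n) (W : Finset (Fin n)) : Finset (Eg n) :=
  univ.filter (fun e => e.1.1 = u ∧ e.1.2 ∉ W)

/-- In-edges of `u` avoiding `W`. -/
def TIn (u : Fin n) (W : Finset (Fin n)) : Finset (Eg n) :=
  univ.filter (fun e => e.1.2 = u ∧ e.1.1 ∉ W)

def Tlow (u : Fin n) (W : Finset (Fin n)) : Finset (Eg n) := TOut u W ∪ TIn u W

/-- The two directed edges between `a` and `b`. -/
def pairE (a b : Fin n) : Finset (Eg n) :=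
  univ.filter (fun e => (e.1.1 = a ∧ e.1.2 = b) ∨ (e.1.1 = b ∧ e.1.2 = a))

/-- Local low-degree event. -/
def Qlow (K : ℕ) (u : Fin n) (B : Finset (Eg n)) : Prop :=
  (B.filter (fun e => e.1.1 = u)).card ≤ K ∨ (B.filter (fun e => e.1.2 = u)).card ≤ K

@[simp] lemma mem_TOut {u : Fin n} {W : Finset (Fin n)} {e : Eg n} :
    e ∈ TOut u W ↔ e.1.1 = u ∧ e.1.2 ∉ W := by
  simp [TOut]

@[simp] lemma mem_TIn {u : Fin n} {W : Finset (Fin n)} {e : Eg n} :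
    e ∈ TIn u W ↔ e.1.2 = u ∧ e.1.1 ∉ W := by
  simp [TIn]

lemma mem_Tlow {u : Fin n} {W : Finset (Fin n)} {e : Eg n} :
    e ∈ Tlow u W ↔ (e.1.1 = u ∧ e.1.2 ∉ W) ∨ (e.1.2 = u ∧ e.1.1 ∉ W) := by
  simp [Tlow]

@[simp] lemma mem_pairE {a b : Fin n} {e : Eg n} :
    e ∈ pairE a b ↔ (e.1.1 = a ∧ e.1.2 = b) ∨ (e.1.1 = b ∧ e.1.2 = a) := by
  simp [pairE]

lemma card_TOut {u : Fin n} {W : Finset (Fin n)} (hu : u ∈ W) :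
    (TOut u W).card = n - W.card := by
  classical
  have key : (TOut u W).card = (univ \ W : Finset (Fin n)).card := by
    apply Finset.card_bij' (i := fun (e : Eg n) (_ : e ∈ TOut u W) => e.1.2)
      (j := fun w hw => (⟨(u, w), by
        intro h
        exact (Finset.mem_sdiff.1 hw).2 ((show u = w from h) ▸ hu)⟩ : Eg n))
    case hi =>
      intro e he
      rw [mem_TOut] at he
      exact Finset.mem_sdiff.2 ⟨Finset.mem_univ _, he.2⟩
    case hj =>
      intro w hw
      rw [mem_TOut]
      exact ⟨rfl, (Finset.mem_sdiff.1 hw).2⟩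
    case left_inv =>
      intro e he
      rw [mem_TOut] at he
      apply Subtype.ext
      exact Prod.ext he.1.symm rfl
    case right_inv =>
      intro w hw
      rfl
  rw [key, Finset.card_sdiff_of_subset (Finset.subset_univ W), Finset.card_univ, Fintype.card_fin]

lemma card_TIn {u : Fin n} {W : Finset (Fin n)} (hu : u ∈ W) :
    (TIn u W).card = n - W.card := by
  classical
  have key : (TIn u W).card = (univ \ W : Finset (Fin n)).card := by
    apply Finset.card_bij' (i := fun (e : Eg n) (_ : e ∈ TIn u W) => e.1.1)
      (j := fun w hw => (⟨(w, u), by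
        intro h
        exact (Finset.mem_sdiff.1 hw).2 ((show w = u from h).symm ▸ hu)⟩ : Eg n))
    case hi =>
      intro e he
      rw [mem_TIn] at he
      exact Finset.mem_sdiff.2 ⟨Finset.mem_univ _, he.2⟩
    case hj =>
      intro w hw
      rw [mem_TIn]
      exact ⟨rfl, (Finset.mem_sdiff.1 hw).2⟩
    case left_inv =>
      intro e he
      rw [mem_TIn] at he
      apply Subtype.ext
      exact Prod.ext rfl he.1.symm
    case right_inv =>
      intro w hw
      rfl
  rw [key, Finset.card_sdiff_of_subset (Finset.subset_univ W), Finset.card_univ, Fintype.card_fin]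

lemma filter_card_le_outdeg (D B : Finset (Eg n)) (u : Fin n) (hB : B ⊆ D) :
    (B.filter (fun e => e.1.1 = u)).card ≤ outdeg D u := by
  classical
  rw [outdeg]
  have hinj : Set.InjOn (fun e : Eg n => e.1.2) (B.filter (fun e => e.1.1 = u)) := by
    intro e he e' he' hee
    rw [Finset.coe_filter, Set.mem_setOf_eq] at he he'
    apply Subtype.ext
    exact Prod.ext (he.2.trans he'.2.symm) hee
  have himg : (((B.filter (fun e => e.1.1 = u)).image (fun e => e.1.2) : Finset (Fin n)) :
      Set (Fin n)) ⊆ {w | drel D u w} := by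
    intro w hw
    simp only [Finset.coe_image, Set.mem_image, Finset.mem_coe, Finset.mem_filter] at hw
    obtain ⟨e, ⟨heB, heu⟩, rfl⟩ := hw
    have hne : u ≠ e.1.2 := heu ▸ e.2
    refine ⟨hne, ?_⟩
    have hee : (⟨(u, e.1.2), hne⟩ : Eg n) = e := Subtype.ext (Prod.ext heu.symm rfl)
    rw [hee]
    exact hB heB
  calc (B.filter (fun e => e.1.1 = u)).card
      = ((B.filter (fun e => e.1.1 = u)).image (fun e => e.1.2)).card :=
        (Finset.card_image_of_injOn hinj).symm
    _ = (((B.filter (fun e => e.1.1 = u)).image (fun e => e.1.2) : Finset (Fin n)) :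
        Set (Fin n)).ncard := (Set.ncard_coe_finset _).symm
    _ ≤ {w | drel D u w}.ncard := Set.ncard_le_ncard himg (Set.toFinite _)

lemma filter_card_le_indeg (D B : Finset (Eg n)) (u : Fin n) (hB : B ⊆ D) :
    (B.filter (fun e => e.1.2 = u)).card ≤ indeg D u := by
  classical
  rw [indeg]
  have hinj : Set.InjOn (fun e : Eg n => e.1.1) (B.filter (fun e => e.1.2 = u)) := by
    intro e he e' he' hee
    rw [Finset.coe_filter, Set.mem_setOf_eq] at he he'
    apply Subtype.ext
    exact Prod.ext hee (he.2.trans he'.2.symm)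
  have himg : (((B.filter (fun e => e.1.2 = u)).image (fun e => e.1.1) : Finset (Fin n)) :
      Set (Fin n)) ⊆ {w | drel D w u} := by
    intro w hw
    simp only [Finset.coe_image, Set.mem_image, Finset.mem_coe, Finset.mem_filter] at hw
    obtain ⟨e, ⟨heB, heu⟩, rfl⟩ := hw
    have hne : e.1.1 ≠ u := by rw [← heu]; exact e.2
    refine ⟨hne, ?_⟩
    have hee : (⟨(e.1.1, u), hne⟩ : Eg n) = e := Subtype.ext (Prod.ext rfl heu.symm)
    rw [hee]
    exact hB heB
  calc (B.filter (fun e => e.1.2 = u)).card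
      = ((B.filter (fun e => e.1.2 = u)).image (fun e => e.1.1)).card :=
        (Finset.card_image_of_injOn hinj).symm
    _ = (((B.filter (fun e => e.1.2 = u)).image (fun e => e.1.1) : Finset (Fin n)) :
        Set (Fin n)).ncard := (Set.ncard_coe_finset _).symm
    _ ≤ {w | drel D w u}.ncard := Set.ncard_le_ncard himg (Set.toFinite _)

lemma low_mem_Qlow {D : Finset (Eg n)} {u : Fin n} (W : Finset (Fin n)) {K : ℕ}
    (hK : Real.log n / 20 ≤ (K : ℝ) + 1) (hu : u ∈ lowSet n D) :
    Qlow K u (D ∩ Tlow u W) := by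
  have hsub : D ∩ Tlow u W ⊆ D := Finset.inter_subset_left
  rcases hu with h | h
  · left
    have h1 := filter_card_le_outdeg D (D ∩ Tlow u W) u hsub
    have h2 : (outdeg D u : ℝ) < (K : ℝ) + 1 := lt_of_lt_of_le h hK
    have h3 : outdeg D u ≤ K := by exact_mod_cast Nat.lt_add_one_iff.1 (by exact_mod_cast h2)
    omega
  · right
    have h1 := filter_card_le_indeg D (D ∩ Tlow u W) u hsub
    have h2 : (indeg D u : ℝ) < (K : ℝ) + 1 := lt_of_lt_of_le h hK
    have h3 : indeg D u ≤ K := by exact_mod_cast Nat.lt_add_one_iff.1 (by exact_mod_cast h2)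
    omega

lemma binTail_nonneg (h0 : 0 ≤ p) (h1 : p ≤ 1) (m K : ℕ) : 0 ≤ binTail p m K := by
  refine Finset.sum_nonneg fun j _ => ?_
  have h1p : (0:ℝ) ≤ 1 - p := by linarith
  positivity

set_option maxHeartbeats 1000000 in
lemma PrOn_Qlow_le (h0 : 0 ≤ p) (h1 : p ≤ 1) {u : Fin n} {W : Finset (Fin n)}
    (hu : u ∈ W) (K : ℕ) :
    PrOn n p (Tlow u W) (Qlow K u) ≤ 2 * binTail p (n - W.card) K := by
  classical
  have hor : PrOn n p (Tlow u W) (Qlow K u)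
      ≤ PrOn n p (Tlow u W) (fun B => (B.filter (fun e => e.1.1 = u)).card ≤ K)
        + PrOn n p (Tlow u W) (fun B => (B.filter (fun e => e.1.2 = u)).card ≤ K) :=
    PrOn_or_le h0 h1 _ _
  have hout : PrOn n p (Tlow u W) (fun B => (B.filter (fun e => e.1.1 = u)).card ≤ K)
      ≤ binTail p (n - W.card) K := by
    have hcongr : PrOn n p (Tlow u W) (fun B => (B.filter (fun e => e.1.1 = u)).card ≤ K)
        = PrOn n p (Tlow u W) (fun B => (fun C => C.card ≤ K) (B ∩ TOut u W)) := by
      refine PrOn_congr fun B hB => ?_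
      have hBsub := Finset.mem_powerset.1 hB
      have heq : B.filter (fun e => e.1.1 = u) = B ∩ TOut u W := by
        ext e
        simp only [Finset.mem_filter, Finset.mem_inter, mem_TOut]
        constructor
        · intro ⟨heB, heu⟩
          refine ⟨heB, heu, ?_⟩
          have := hBsub heB
          rw [mem_Tlow] at this
          rcases this with ⟨_, h2⟩ | ⟨h1, _⟩
          · exact h2
          · exact absurd (heu.trans h1.symm) e.2
        · intro ⟨heB, heu, _⟩
          exact ⟨heB, heu⟩
      rw [heq]
    rw [hcongr, show Tlow u W = TOut u W ∪ TIn u W from rfl]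
    refine (PrOn_restrict h0 h1 Finset.subset_union_left (fun C => C.card ≤ K)).trans ?_
    have := PrOn_card_le (n := n) h0 h1 (TOut u W) K
    rwa [card_TOut hu] at this
  have hin : PrOn n p (Tlow u W) (fun B => (B.filter (fun e => e.1.2 = u)).card ≤ K)
      ≤ binTail p (n - W.card) K := by
    have hcongr : PrOn n p (Tlow u W) (fun B => (B.filter (fun e => e.1.2 = u)).card ≤ K)
        = PrOn n p (Tlow u W) (fun B => (fun C => C.card ≤ K) (B ∩ TIn u W)) := by
      refine PrOn_congr fun B hB => ?_
      have hBsub := Finset.mem_powerset.1 hB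
      have heq : B.filter (fun e => e.1.2 = u) = B ∩ TIn u W := by
        ext e
        simp only [Finset.mem_filter, Finset.mem_inter, mem_TIn]
        constructor
        · intro ⟨heB, heu⟩
          refine ⟨heB, heu, ?_⟩
          have := hBsub heB
          rw [mem_Tlow] at this
          rcases this with ⟨h1, _⟩ | ⟨_, h2⟩
          · exact absurd (h1.trans heu.symm) e.2
          · exact h2
        · intro ⟨heB, heu, _⟩
          exact ⟨heB, heu⟩
      rw [heq]
    rw [hcongr, show Tlow u W = TOut u W ∪ TIn u W from rfl]
    refine (PrOn_restrict h0 h1 Finset.subset_union_right (fun C => C.card ≤ K)).trans ?_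
    have := PrOn_card_le (n := n) h0 h1 (TIn u W) K
    rwa [card_TIn hu] at this
  linarith

open scoped Classical in
lemma prob_low_vertex (h0 : 0 ≤ p) (h1 : p ≤ 1) {K : ℕ}
    (hK : Real.log n / 20 ≤ (K : ℝ) + 1) (v : Fin n) :
    dnpProb n p (fun D => v ∈ lowSet n D) ≤ 2 * binTail p (n - 1) K := by
  rw [dnpProb_eq_PrOn]
  calc PrOn n p univ (fun D => v ∈ lowSet n D)
      ≤ PrOn n p univ (fun A => (Qlow K v) (A ∩ Tlow v {v})) :=
        PrOn_mono h0 h1 (fun A _ h => low_mem_Qlow {v} hK h)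
    _ ≤ PrOn n p (Tlow v {v}) (Qlow K v) := PrOn_restrict h0 h1 (Finset.subset_univ _) _
    _ ≤ 2 * binTail p (n - 1) K := by
        simpa using PrOn_Qlow_le h0 h1 (Finset.mem_singleton_self v) K

end GraphEvents


/-! ### Path and cycle event probabilities -/

section PathCycleEvents

variable {n : ℕ} {p : ℝ}

lemma pairE_eq {a b : Fin n} (hab : a ≠ b) :
    pairE a b = {(⟨(a, b), hab⟩ : Eg n), ⟨(b, a), hab.symm⟩} := by
  ext e
  rw [mem_pairE, Finset.mem_insert, Finset.mem_singleton]
  constructor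
  · rintro (⟨h1, h2⟩ | ⟨h1, h2⟩)
    · exact Or.inl (Subtype.ext (Prod.ext h1 h2))
    · exact Or.inr (Subtype.ext (Prod.ext h1 h2))
  · rintro (rfl | rfl)
    · exact Or.inl ⟨rfl, rfl⟩
    · exact Or.inr ⟨rfl, rfl⟩

lemma card_pairE {a b : Fin n} (hab : a ≠ b) : (pairE a b).card = 2 := by
  rw [pairE_eq hab, Finset.card_insert_of_notMem, Finset.card_singleton]
  intro h
  rw [Finset.mem_singleton] at h
  have := congrArg (fun e : Eg n => e.1.1) h
  exact hab this

lemma card_pairE_le (a b : Fin n) : (pairE a b).card ≤ 2 := by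
  by_cases hab : a = b
  · have : pairE a b = ∅ := by
      ext e
      rw [mem_pairE]
      simp only [Finset.notMem_empty, iff_false]
      rintro (⟨h1, h2⟩ | ⟨h1, h2⟩) <;> exact e.2 (by rw [h1, h2, hab])
    rw [this]
    simp
  · rw [card_pairE hab]

lemma inter_pairE_nonempty {D : Finset (Eg n)} {a b : Fin n} (h : urel D a b) :
    (D ∩ pairE a b).Nonempty := by
  rcases h with ⟨hab, hm⟩ | ⟨hba, hm⟩
  · exact ⟨⟨(a, b), hab⟩, Finset.mem_inter.2 ⟨hm, mem_pairE.2 (Or.inl ⟨rfl, rfl⟩)⟩⟩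
  · exact ⟨⟨(b, a), hba⟩, Finset.mem_inter.2 ⟨hm, mem_pairE.2 (Or.inr ⟨rfl, rfl⟩)⟩⟩

lemma inter_pairE_full {D : Finset (Eg n)} {a b : Fin n}
    (h1 : drel D a b) (h2 : drel D b a) : D ∩ pairE a b = pairE a b := by
  refine Finset.inter_eq_right.2 fun e he => ?_
  rw [mem_pairE] at he
  rcases he with ⟨ha, hb⟩ | ⟨ha, hb⟩
  · obtain ⟨hab, hm⟩ := h1
    have : e = ⟨(a, b), hab⟩ := Subtype.ext (Prod.ext ha hb)
    rw [this]; exact hm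
  · obtain ⟨hba, hm⟩ := h2
    have : e = ⟨(b, a), hba⟩ := Subtype.ext (Prod.ext ha hb)
    rw [this]; exact hm

lemma disj_pairE_pairE {a b c d : Fin n} (h1 : ¬(a = c ∧ b = d)) (h2 : ¬(a = d ∧ b = c)) :
    Disjoint (pairE a b) (pairE c d) := by
  rw [Finset.disjoint_left]
  intro e he1 he2
  rw [mem_pairE] at he1 he2
  rcases he1 with ⟨ha, hb⟩ | ⟨ha, hb⟩ <;> rcases he2 with ⟨hc, hd⟩ | ⟨hc, hd⟩
  · exact h1 ⟨ha.symm.trans hc, hb.symm.trans hd⟩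
  · exact h2 ⟨ha.symm.trans hc, hb.symm.trans hd⟩
  · exact h2 ⟨hb.symm.trans hd, ha.symm.trans hc⟩
  · exact h1 ⟨hb.symm.trans hd, ha.symm.trans hc⟩

lemma disj_pairE_Tlow {a b u : Fin n} {W : Finset (Fin n)} (ha : a ∈ W) (hb : b ∈ W) :
    Disjoint (pairE a b) (Tlow u W) := by
  rw [Finset.disjoint_left]
  intro e he ht
  rw [mem_pairE] at he
  rw [mem_Tlow] at ht
  rcases he with ⟨h1, h2⟩ | ⟨h1, h2⟩ <;> rcases ht with ⟨h3, h4⟩ | ⟨h3, h4⟩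
  · exact h4 (by rw [h2]; exact hb)
  · exact h4 (by rw [h1]; exact ha)
  · exact h4 (by rw [h2]; exact ha)
  · exact h4 (by rw [h1]; exact hb)

lemma disj_Tlow_Tlow {u v : Fin n} {W : Finset (Fin n)} (hu : u ∈ W) (hv : v ∈ W)
    (huv : u ≠ v) : Disjoint (Tlow u W) (Tlow v W) := by
  rw [Finset.disjoint_left]
  intro e he ht
  rw [mem_Tlow] at he ht
  rcases he with ⟨h1, h2⟩ | ⟨h1, h2⟩ <;> rcases ht with ⟨h3, h4⟩ | ⟨h3, h4⟩
  · exact huv (h1.symm.trans h3)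
  · exact h2 (by rw [h3]; exact hv)
  · exact h2 (by rw [h3]; exact hv)
  · exact huv (h1.symm.trans h3)

open scoped Classical in
lemma prob_path_event (h0 : 0 ≤ p) (h1 : p ≤ 1) {L : ℕ} (hL2 : 2 ≤ L) (hL5 : L ≤ 5)
    {K : ℕ} (hK : Real.log n / 20 ≤ (K : ℝ) + 1)
    (f : ℕ → Fin n) (hf : Set.InjOn f (Set.Iio L)) :
    dnpProb n p (fun D => (∀ i, i + 1 < L → urel D (f i) (f (i + 1)))
        ∧ f 0 ∈ lowSet n D ∧ f (L - 1) ∈ lowSet n D)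
      ≤ (2 * p) ^ (L - 1) * (2 * binTail p (n - L) K) ^ 2 := by
  classical
  set W : Finset (Fin n) := (Finset.range L).image f with hW
  have hWmem : ∀ i, i < L → f i ∈ W :=
    fun i hi => Finset.mem_image.2 ⟨i, Finset.mem_range.2 hi, rfl⟩
  have hWcard : W.card = L := by
    rw [hW, Finset.card_image_of_injOn (by rw [Finset.coe_range]; exact hf),
      Finset.card_range]
  have hfne : ∀ i j, i < L → j < L → i ≠ j → f i ≠ f j := by
    intro i j hi hj hij hEq
    exact hij (hf (Set.mem_Iio.2 hi) (Set.mem_Iio.2 hj) hEq)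
  set T : ℕ → Finset (Eg n) := fun i =>
    if i < L - 1 then pairE (f i) (f (i + 1))
    else if i = L - 1 then Tlow (f 0) W else Tlow (f (L - 1)) W with hT
  set Q : ℕ → Finset (Eg n) → Prop := fun i =>
    if i < L - 1 then (fun B => B.Nonempty)
    else if i = L - 1 then Qlow K (f 0) else Qlow K (f (L - 1)) with hQ
  have hTi : ∀ i, i < L - 1 → T i = pairE (f i) (f (i + 1)) := by
    intro i hi; rw [hT]; simp only; rw [if_pos hi]
  have hQi : ∀ i, i < L - 1 → Q i = (fun B => B.Nonempty) := by
    intro i hi; rw [hQ]; simp only; rw [if_pos hi]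
  have hTL1 : T (L - 1) = Tlow (f 0) W := by
    rw [hT]; simp only; rw [if_neg (lt_irrefl _)]; simp
  have hQL1 : Q (L - 1) = Qlow K (f 0) := by
    rw [hQ]; simp only; rw [if_neg (lt_irrefl _)]; simp
  have hTL : T L = Tlow (f (L - 1)) W := by
    rw [hT]; simp only; rw [if_neg (by omega), if_neg (by omega)]
  have hQL : Q L = Qlow K (f (L - 1)) := by
    rw [hQ]; simp only; rw [if_neg (by omega), if_neg (by omega)]
  rw [dnpProb_eq_PrOn]
  have step1 : PrOn n p univ (fun D => (∀ i, i + 1 < L → urel D (f i) (f (i + 1)))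
        ∧ f 0 ∈ lowSet n D ∧ f (L - 1) ∈ lowSet n D)
      ≤ PrOn n p univ (fun A => ∀ i ∈ Finset.range (L + 1), Q i (A ∩ T i)) := by
    refine PrOn_mono h0 h1 fun A _ hA => ?_
    intro i hi
    rw [Finset.mem_range] at hi
    rcases lt_trichotomy i (L - 1) with hlt | heq | hgt
    · rw [hTi i hlt, hQi i hlt]
      exact inter_pairE_nonempty (hA.1 i (by omega))
    · rw [heq, hTL1, hQL1]
      exact low_mem_Qlow W hK hA.2.1
    · have hiL : i = L := by omega
      rw [hiL, hTL, hQL]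
      exact low_mem_Qlow W hK hA.2.2
  have hdisj : ∀ i j, i < j → j ≤ L → Disjoint (T i) (T j) := by
    intro i j hij hjL
    by_cases hj1 : j < L - 1
    · rw [hTi i (by omega), hTi j hj1]
      refine disj_pairE_pairE ?_ ?_
      · rintro ⟨hfe, -⟩
        exact hfne i j (by omega) (by omega) (by omega) hfe
      · rintro ⟨hfe, -⟩
        exact hfne i (j + 1) (by omega) (by omega) (by omega) hfe
    · by_cases hi1 : i < L - 1
      · have hTj : T j = Tlow (f 0) W ∨ T j = Tlow (f (L - 1)) W := by
          rcases (show j = L - 1 ∨ j = L by omega) with h | h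
          · exact Or.inl (h ▸ hTL1)
          · exact Or.inr (h ▸ hTL)
        rcases hTj with h | h <;> rw [hTi i hi1, h] <;>
          exact disj_pairE_Tlow (hWmem i (by omega)) (hWmem (i + 1) (by omega))
      · have hi' : i = L - 1 := by omega
        have hj' : j = L := by omega
        rw [hi', hj', hTL1, hTL]
        exact disj_Tlow_Tlow (hWmem 0 (by omega)) (hWmem (L - 1) (by omega))
          (hfne 0 (L - 1) (by omega) (by omega) (by omega))
  have hpw : ((Finset.range (L + 1) : Finset ℕ) : Set ℕ).Pairwise
      (fun i j => Disjoint (T i) (T j)) := by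
    intro i hi j hj hij
    rw [Finset.mem_coe, Finset.mem_range] at hi hj
    rcases lt_or_gt_of_ne hij with h | h
    · exact hdisj i j h (by omega)
    · exact (hdisj j i h (by omega)).symm
  have step2 := PrOn_prod_le h0 h1 (Finset.range (L + 1)) T Q univ
    (fun i _ => Finset.subset_univ _) hpw
  have hprod : ∏ i ∈ Finset.range (L + 1), PrOn n p (T i) (Q i)
      ≤ (2 * p) ^ (L - 1) * (2 * binTail p (n - L) K) ^ 2 := by
    have hsplit : Finset.range (L + 1) = Finset.range (L - 1 + 1 + 1) := by
      congr 1
      omega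
    rw [hsplit, Finset.prod_range_succ, Finset.prod_range_succ,
      show L - 1 + 1 = L from by omega]
    have hb1 : ∏ i ∈ Finset.range (L - 1), PrOn n p (T i) (Q i) ≤ (2 * p) ^ (L - 1) := by
      have : (2 * p) ^ (L - 1) = ∏ _i ∈ Finset.range (L - 1), (2 * p) := by
        rw [Finset.prod_const, Finset.card_range]
      rw [this]
      refine Finset.prod_le_prod (fun i _ => PrOn_nonneg h0 h1 _ _) (fun i hi => ?_)
      rw [Finset.mem_range] at hi
      rw [hTi i hi, hQi i hi]
      exact PrOn_nonempty_le h0 h1 (card_pairE_le _ _)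
    have hb2 : PrOn n p (T (L - 1)) (Q (L - 1)) ≤ 2 * binTail p (n - L) K := by
      rw [hTL1, hQL1]
      have := PrOn_Qlow_le h0 h1 (hWmem 0 (by omega)) K
      rwa [hWcard] at this
    have hb3 : PrOn n p (T L) (Q L) ≤ 2 * binTail p (n - L) K := by
      rw [hTL, hQL]
      have := PrOn_Qlow_le h0 h1 (hWmem (L - 1) (by omega)) K
      rwa [hWcard] at this
    have hn1 : (0:ℝ) ≤ ∏ i ∈ Finset.range (L - 1), PrOn n p (T i) (Q i) :=
      Finset.prod_nonneg fun i _ => PrOn_nonneg h0 h1 _ _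
    have hn2 : (0:ℝ) ≤ PrOn n p (T (L - 1)) (Q (L - 1)) := PrOn_nonneg h0 h1 _ _
    have hn3 : (0:ℝ) ≤ PrOn n p (T L) (Q L) := PrOn_nonneg h0 h1 _ _
    have hp1 : (0:ℝ) ≤ (2 * p) ^ (L - 1) := pow_nonneg (by linarith) _
    have hbt : (0:ℝ) ≤ 2 * binTail p (n - L) K := by
      have := binTail_nonneg h0 h1 (n - L) K
      linarith
    calc (∏ i ∈ Finset.range (L - 1), PrOn n p (T i) (Q i))
          * PrOn n p (T (L - 1)) (Q (L - 1)) * PrOn n p (T L) (Q L)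
        ≤ (2 * p) ^ (L - 1) * (2 * binTail p (n - L) K) * (2 * binTail p (n - L) K) := by
          refine mul_le_mul (mul_le_mul hb1 hb2 hn2 hp1) hb3 hn3 ?_
          exact mul_nonneg hp1 hbt
      _ = (2 * p) ^ (L - 1) * (2 * binTail p (n - L) K) ^ 2 := by ring
  exact step1.trans (step2.trans hprod)

open scoped Classical in
lemma prob_cycle_event (h0 : 0 ≤ p) (h1 : p ≤ 1) {L : ℕ} (hL3 : 3 ≤ L) (hL4 : L ≤ 4)
    {K : ℕ} (hK : Real.log n / 20 ≤ (K : ℝ) + 1)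
    (f : ℕ → Fin n) (hf : Set.InjOn f (Set.Iio L)) {j : ℕ} (hj : j < L) :
    dnpProb n p (fun D => (∀ i, i + 1 < L → urel D (f i) (f (i + 1)))
        ∧ urel D (f (L - 1)) (f 0) ∧ f j ∈ lowSet n D)
      ≤ (2 * p) ^ L * (2 * binTail p (n - L) K) := by
  classical
  set W : Finset (Fin n) := (Finset.range L).image f with hW
  have hWmem : ∀ i, i < L → f i ∈ W :=
    fun i hi => Finset.mem_image.2 ⟨i, Finset.mem_range.2 hi, rfl⟩
  have hWcard : W.card = L := by
    rw [hW, Finset.card_image_of_injOn (by rw [Finset.coe_range]; exact hf),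
      Finset.card_range]
  have hfne : ∀ i i', i < L → i' < L → i ≠ i' → f i ≠ f i' := by
    intro i i' hi hi' hii hEq
    exact hii (hf (Set.mem_Iio.2 hi) (Set.mem_Iio.2 hi') hEq)
  set T : ℕ → Finset (Eg n) := fun i =>
    if i < L - 1 then pairE (f i) (f (i + 1))
    else if i = L - 1 then pairE (f (L - 1)) (f 0) else Tlow (f j) W with hT
  set Q : ℕ → Finset (Eg n) → Prop := fun i =>
    if i < L - 1 then (fun B => B.Nonempty)
    else if i = L - 1 then (fun B => B.Nonempty) else Qlow K (f j) with hQ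
  have hTi : ∀ i, i < L - 1 → T i = pairE (f i) (f (i + 1)) := by
    intro i hi; rw [hT]; simp only; rw [if_pos hi]
  have hQi : ∀ i, i < L - 1 → Q i = (fun B => B.Nonempty) := by
    intro i hi; rw [hQ]; simp only; rw [if_pos hi]
  have hTL1 : T (L - 1) = pairE (f (L - 1)) (f 0) := by
    rw [hT]; simp only; rw [if_neg (lt_irrefl _)]; simp
  have hQL1 : Q (L - 1) = (fun B => B.Nonempty) := by
    rw [hQ]; simp only; rw [if_neg (lt_irrefl _)]; simp
  have hTL : T L = Tlow (f j) W := by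
    rw [hT]; simp only; rw [if_neg (by omega), if_neg (by omega)]
  have hQL : Q L = Qlow K (f j) := by
    rw [hQ]; simp only; rw [if_neg (by omega), if_neg (by omega)]
  rw [dnpProb_eq_PrOn]
  have step1 : PrOn n p univ (fun D => (∀ i, i + 1 < L → urel D (f i) (f (i + 1)))
        ∧ urel D (f (L - 1)) (f 0) ∧ f j ∈ lowSet n D)
      ≤ PrOn n p univ (fun A => ∀ i ∈ Finset.range (L + 1), Q i (A ∩ T i)) := by
    refine PrOn_mono h0 h1 fun A _ hA => ?_
    intro i hi
    rw [Finset.mem_range] at hi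
    rcases lt_trichotomy i (L - 1) with hlt | heq | hgt
    · rw [hTi i hlt, hQi i hlt]
      exact inter_pairE_nonempty (hA.1 i (by omega))
    · rw [heq, hTL1, hQL1]
      exact inter_pairE_nonempty hA.2.1
    · have hiL : i = L := by omega
      rw [hiL, hTL, hQL]
      exact low_mem_Qlow W hK hA.2.2
  have hdisj : ∀ i i', i < i' → i' ≤ L → Disjoint (T i) (T i') := by
    intro i i' hii hi'L
    by_cases hj1 : i' < L - 1
    · rw [hTi i (by omega), hTi i' hj1]
      refine disj_pairE_pairE ?_ ?_
      · rintro ⟨hfe, -⟩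
        exact hfne i i' (by omega) (by omega) (by omega) hfe
      · rintro ⟨hfe, -⟩
        exact hfne i (i' + 1) (by omega) (by omega) (by omega) hfe
    · by_cases hi'1 : i' = L - 1
      · rw [hTi i (by omega), hi'1, hTL1]
        refine disj_pairE_pairE ?_ ?_
        · rintro ⟨hfe, -⟩
          exact hfne i (L - 1) (by omega) (by omega) (by omega) hfe
        · rintro ⟨hfe1, hfe2⟩
          have h1 : i = 0 := by
            by_contra hi0
            exact hfne i 0 (by omega) (by omega) hi0 hfe1
          have h2 : i + 1 = L - 1 := by
            by_contra hi1
            exact hfne (i + 1) (L - 1) (by omega) (by omega) hi1 hfe2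
          omega
      · have hi'' : i' = L := by omega
        rw [hi'', hTL]
        by_cases hi1 : i < L - 1
        · rw [hTi i hi1]
          exact disj_pairE_Tlow (hWmem i (by omega)) (hWmem (i + 1) (by omega))
        · have : i = L - 1 := by omega
          rw [this, hTL1]
          exact disj_pairE_Tlow (hWmem (L - 1) (by omega)) (hWmem 0 (by omega))
  have hpw : ((Finset.range (L + 1) : Finset ℕ) : Set ℕ).Pairwise
      (fun i i' => Disjoint (T i) (T i')) := by
    intro i hi i' hi' hii
    rw [Finset.mem_coe, Finset.mem_range] at hi hi'
    rcases lt_or_gt_of_ne hii with h | h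
    · exact hdisj i i' h (by omega)
    · exact (hdisj i' i h (by omega)).symm
  have step2 := PrOn_prod_le h0 h1 (Finset.range (L + 1)) T Q univ
    (fun i _ => Finset.subset_univ _) hpw
  have hprod : ∏ i ∈ Finset.range (L + 1), PrOn n p (T i) (Q i)
      ≤ (2 * p) ^ L * (2 * binTail p (n - L) K) := by
    rw [Finset.prod_range_succ]
    have hb1 : ∏ i ∈ Finset.range L, PrOn n p (T i) (Q i) ≤ (2 * p) ^ L := by
      have : (2 * p) ^ L = ∏ _i ∈ Finset.range L, (2 * p) := by
        rw [Finset.prod_const, Finset.card_range]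
      rw [this]
      refine Finset.prod_le_prod (fun i _ => PrOn_nonneg h0 h1 _ _) (fun i hi => ?_)
      rw [Finset.mem_range] at hi
      rcases (show i < L - 1 ∨ i = L - 1 by omega) with h | h
      · rw [hTi i h, hQi i h]
        exact PrOn_nonempty_le h0 h1 (card_pairE_le _ _)
      · rw [h, hTL1, hQL1]
        exact PrOn_nonempty_le h0 h1 (card_pairE_le _ _)
    have hb2 : PrOn n p (T L) (Q L) ≤ 2 * binTail p (n - L) K := by
      rw [hTL, hQL]
      have := PrOn_Qlow_le h0 h1 (hWmem j hj) K
      rwa [hWcard] at this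
    have hn2 : (0:ℝ) ≤ PrOn n p (T L) (Q L) := PrOn_nonneg h0 h1 _ _
    have hp1 : (0:ℝ) ≤ (2 * p) ^ L := pow_nonneg (by linarith) _
    exact mul_le_mul hb1 hb2 hn2 hp1
  exact step1.trans (step2.trans hprod)

open scoped Classical in
lemma prob_twocycle_event (h0 : 0 ≤ p) (h1 : p ≤ 1)
    {K : ℕ} (hK : Real.log n / 20 ≤ (K : ℝ) + 1)
    {a b u : Fin n} (hab : a ≠ b) (hu : u = a ∨ u = b) :
    dnpProb n p (fun D => drel D a b ∧ drel D b a ∧ u ∈ lowSet n D)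
      ≤ p ^ 2 * (2 * binTail p (n - 2) K) := by
  classical
  set W : Finset (Fin n) := {a, b} with hW
  have hWcard : W.card = 2 := by
    rw [hW, Finset.card_insert_of_notMem (by simpa using hab), Finset.card_singleton]
  have huW : u ∈ W := by
    rcases hu with rfl | rfl
    · exact Finset.mem_insert_self _ _
    · exact Finset.mem_insert_of_mem (Finset.mem_singleton_self _)
  set T : ℕ → Finset (Eg n) := fun i => if i = 0 then pairE a b else Tlow u W with hT
  set Q : ℕ → Finset (Eg n) → Prop := fun i =>
    if i = 0 then (fun B => B = pairE a b) else Qlow K u with hQ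
  have hT0 : T 0 = pairE a b := by rw [hT]; simp
  have hQ0 : Q 0 = (fun B => B = pairE a b) := by rw [hQ]; simp
  have hT1 : T 1 = Tlow u W := by rw [hT]; simp only; rw [if_neg one_ne_zero]
  have hQ1 : Q 1 = Qlow K u := by rw [hQ]; simp only; rw [if_neg one_ne_zero]
  rw [dnpProb_eq_PrOn]
  have step1 : PrOn n p univ (fun D => drel D a b ∧ drel D b a ∧ u ∈ lowSet n D)
      ≤ PrOn n p univ (fun A => ∀ i ∈ Finset.range 2, Q i (A ∩ T i)) := by
    refine PrOn_mono h0 h1 fun A _ hA => ?_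
    intro i hi
    rw [Finset.mem_range] at hi
    rcases (show i = 0 ∨ i = 1 by omega) with rfl | rfl
    · rw [hT0, hQ0]
      exact inter_pairE_full hA.1 hA.2.1
    · rw [hT1, hQ1]
      exact low_mem_Qlow W hK hA.2.2
  have hpw : ((Finset.range 2 : Finset ℕ) : Set ℕ).Pairwise
      (fun i i' => Disjoint (T i) (T i')) := by
    intro i hi i' hi' hii
    rw [Finset.mem_coe, Finset.mem_range] at hi hi'
    have hd : Disjoint (T 0) (T 1) := by
      rw [hT0, hT1]
      exact disj_pairE_Tlow (Finset.mem_insert_self _ _)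
        (Finset.mem_insert_of_mem (Finset.mem_singleton_self _))
    rcases (show i = 0 ∧ i' = 1 ∨ i = 1 ∧ i' = 0 by omega) with ⟨rfl, rfl⟩ | ⟨rfl, rfl⟩
    · exact hd
    · exact hd.symm
  have step2 := PrOn_prod_le h0 h1 (Finset.range 2) T Q univ
    (fun i _ => Finset.subset_univ _) hpw
  have hprod : ∏ i ∈ Finset.range 2, PrOn n p (T i) (Q i)
      ≤ p ^ 2 * (2 * binTail p (n - 2) K) := by
    rw [show (2:ℕ) = 1 + 1 from rfl, Finset.prod_range_succ, Finset.prod_range_one]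
    have hb1 : PrOn n p (T 0) (Q 0) = p ^ 2 := by
      rw [hT0, hQ0, PrOn_eq_full, card_pairE hab]
    have hb2 : PrOn n p (T 1) (Q 1) ≤ 2 * binTail p (n - 2) K := by
      rw [hT1, hQ1]
      have := PrOn_Qlow_le h0 h1 huW K
      rwa [hWcard] at this
    rw [hb1]
    refine mul_le_mul_of_nonneg_left hb2 (by positivity)
  exact step1.trans (step2.trans hprod)

end PathCycleEvents


/-! ### Union bounds over witnesses -/

section UnionBounds

variable {n : ℕ} {p : ℝ}

lemma dnp_mono (h0 : 0 ≤ p) (h1 : p ≤ 1) {P Q : Finset (Eg n) → Prop}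
    (h : ∀ D, P D → Q D) : dnpProb n p P ≤ dnpProb n p Q := by
  rw [dnpProb_eq_PrOn, dnpProb_eq_PrOn]
  exact PrOn_mono h0 h1 fun A _ hA => h A hA

lemma dnp_nonneg (h0 : 0 ≤ p) (h1 : p ≤ 1) (P : Finset (Eg n) → Prop) :
    0 ≤ dnpProb n p P := by
  rw [dnpProb_eq_PrOn]; exact PrOn_nonneg h0 h1 _ _

lemma dnp_of_false {P : Finset (Eg n) → Prop} (h : ∀ D, ¬ P D) : dnpProb n p P = 0 := by
  classical
  rw [dnpProb]
  exact Finset.sum_eq_zero fun D _ => if_neg (h D)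

lemma dnp_exists_le {ι : Type*} (h0 : 0 ≤ p) (h1 : p ≤ 1) (s : Finset ι)
    (R : ι → Finset (Eg n) → Prop) (P : Finset (Eg n) → Prop)
    (h : ∀ D, P D → ∃ i ∈ s, R i D) :
    dnpProb n p P ≤ ∑ i ∈ s, dnpProb n p (R i) := by
  rw [dnpProb_eq_PrOn]
  calc PrOn n p univ P ≤ ∑ i ∈ s, PrOn n p univ (R i) :=
        PrOn_union_bound h0 h1 s R P (fun A _ hA => h A hA)
    _ = ∑ i ∈ s, dnpProb n p (R i) :=
        Finset.sum_congr rfl fun i _ => (dnpProb_eq_PrOn (R i)).symm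

open scoped Classical in
lemma dnp_count {ι : Type*} (h0 : 0 ≤ p) (h1 : p ≤ 1) (s : Finset ι)
    (R : ι → Finset (Eg n) → Prop) (P : Finset (Eg n) → Prop) (t : ℝ)
    (h : ∀ D, P D → t ≤ ((s.filter (fun i => R i D)).card : ℝ)) :
    t * dnpProb n p P ≤ ∑ i ∈ s, dnpProb n p (R i) := by
  rw [dnpProb_eq_PrOn]
  calc t * PrOn n p univ P ≤ ∑ i ∈ s, PrOn n p univ (R i) :=
        PrOn_count h0 h1 s R P t (fun A _ hA => h A hA)
    _ = ∑ i ∈ s, dnpProb n p (R i) :=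
        Finset.sum_congr rfl fun i _ => (dnpProb_eq_PrOn (R i)).symm

lemma dnp_compl (P : Finset (Eg n) → Prop) :
    dnpProb n p P = 1 - dnpProb n p (fun D => ¬ P D) := by
  rw [dnpProb_eq_PrOn, dnpProb_eq_PrOn]
  have := PrOn_add_compl (p := p) (univ : Finset (Eg n)) P
  linarith

lemma spath_witness {D : Finset (Eg n)} {S : Set (Fin n)} {l : List (Fin n)}
    (h : IsSPath D S l) :
    ∃ L, 2 ≤ L ∧ L ≤ 5 ∧ ∃ f : ℕ → Fin n, Set.InjOn f (Set.Iio (L : ℕ))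
      ∧ (∀ i, i + 1 < L → urel D (f i) (f (i + 1))) ∧ f 0 ∈ S ∧ f (L - 1) ∈ S := by
  obtain ⟨hnd, hlen2, hlen5, hchain, hends⟩ := h
  have hne : l ≠ [] := by
    intro hl
    rw [hl] at hlen2
    simp at hlen2
  refine ⟨l.length, hlen2, hlen5, fun i => l.getD i (l.head hne), ?_, ?_, ?_, ?_⟩
  · intro i hi j hj hij
    rw [Set.mem_Iio] at hi hj
    simp only [List.getD_eq_getElem _ _ hi, List.getD_eq_getElem _ _ hj] at hij
    have hinj := List.nodup_iff_injective_get.1 hnd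
    have := hinj (a₁ := ⟨i, hi⟩) (a₂ := ⟨j, hj⟩)
      (by simpa [List.get_eq_getElem] using hij)
    simpa using congrArg Fin.val this
  · intro i hi
    have h1 : i < l.length := by omega
    simp only [List.getD_eq_getElem _ _ h1, List.getD_eq_getElem _ _ hi]
    have := List.isChain_iff_getElem.1 hchain i (by omega)
    simpa [List.get_eq_getElem] using this
  · have h0 : (0:ℕ) < l.length := by omega
    dsimp only
    rw [List.getD_eq_getElem _ _ h0, ← List.head_eq_getElem_zero hne]
    exact (hends hne).1
  · have hlast : l.length - 1 < l.length := by omega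
    dsimp only
    rw [List.getD_eq_getElem _ _ hlast, ← List.getLast_eq_getElem hne]
    exact (hends hne).2

lemma scycle_witness {D : Finset (Eg n)} {S : Set (Fin n)} {l : List (Fin n)}
    (h : IsSCycle D S l) :
    (∃ a b : Fin n, a ≠ b ∧ drel D a b ∧ drel D b a ∧ (a ∈ S ∨ b ∈ S))
    ∨ (∃ L, 3 ≤ L ∧ L ≤ 4 ∧ ∃ f : ℕ → Fin n, Set.InjOn f (Set.Iio (L : ℕ))
        ∧ (∀ i, i + 1 < L → urel D (f i) (f (i + 1))) ∧ urel D (f (L - 1)) (f 0)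
        ∧ ∃ j, j < L ∧ f j ∈ S) := by
  obtain ⟨hnd, ⟨v, hvl, hvS⟩, hcase⟩ := h
  rcases hcase with ⟨a, b, rfl, hab1, hab2⟩ | ⟨hl3, hl4, hch⟩
  · left
    refine ⟨a, b, ?_, hab1, hab2, ?_⟩
    · simpa using (List.nodup_cons.1 hnd).1
    · rcases (by simpa using hvl : v = a ∨ v = b) with rfl | rfl
      · exact Or.inl hvS
      · exact Or.inr hvS
  · right
    have hne : l ≠ [] := by
      intro hl
      rw [hl] at hl3
      simp at hl3
    have hch' := hch hne
    replace hch' := List.isChain_append.1 hch'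
    obtain ⟨hchain, -, hwrap⟩ := hch'
    refine ⟨l.length, hl3, hl4, fun i => l.getD i (l.head hne), ?_, ?_, ?_, ?_⟩
    · intro i hi j hj hij
      rw [Set.mem_Iio] at hi hj
      simp only [List.getD_eq_getElem _ _ hi, List.getD_eq_getElem _ _ hj] at hij
      have hinj := List.nodup_iff_injective_get.1 hnd
      have := hinj (a₁ := ⟨i, hi⟩) (a₂ := ⟨j, hj⟩)
        (by simpa [List.get_eq_getElem] using hij)
      simpa using congrArg Fin.val this
    · intro i hi
      have h1 : i < l.length := by omega
      simp only [List.getD_eq_getElem _ _ h1, List.getD_eq_getElem _ _ hi]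
      have := List.isChain_iff_getElem.1 hchain i (by omega)
      simpa [List.get_eq_getElem] using this
    · have hlast : l.length - 1 < l.length := by omega
      have h0 : (0:ℕ) < l.length := by omega
      dsimp only
      rw [List.getD_eq_getElem _ _ hlast, List.getD_eq_getElem _ _ h0,
        ← List.getLast_eq_getElem hne, ← List.head_eq_getElem_zero hne]
      exact hwrap _ (by rw [List.getLast?_eq_getLast_of_ne_nil hne]; rfl) _ rfl
    · obtain ⟨⟨j, hj⟩, rfl⟩ := List.mem_iff_get.1 hvl
      exact ⟨j, hj, by dsimp only; rw [List.getD_eq_getElem _ _ hj]; simpa [List.get_eq_getElem] using hvS⟩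

open scoped Classical in
lemma prob_badpathL (h0 : 0 ≤ p) (h1 : p ≤ 1) {K : ℕ}
    (hK : Real.log n / 20 ≤ (K : ℝ) + 1) {L : ℕ} (hL2 : 2 ≤ L) (hL5 : L ≤ 5) :
    dnpProb n p (fun D => ∃ f : ℕ → Fin n, Set.InjOn f (Set.Iio (L : ℕ))
        ∧ (∀ i, i + 1 < L → urel D (f i) (f (i + 1)))
        ∧ f 0 ∈ lowSet n D ∧ f (L - 1) ∈ lowSet n D)
      ≤ (n : ℝ) ^ L * ((2 * p) ^ (L - 1) * (2 * binTail p (n - L) K) ^ 2) := by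
  classical
  set fg : (Fin L → Fin n) → ℕ → Fin n :=
    fun g i => g ⟨min i (L - 1), by omega⟩ with hfg
  set R : (Fin L → Fin n) → Finset (Eg n) → Prop := fun g D =>
    Set.InjOn (fg g) (Set.Iio (L : ℕ))
      ∧ (∀ i, i + 1 < L → urel D (fg g i) (fg g (i + 1)))
      ∧ fg g 0 ∈ lowSet n D ∧ fg g (L - 1) ∈ lowSet n D with hR
  have hwit : ∀ D, (∃ f : ℕ → Fin n, Set.InjOn f (Set.Iio (L : ℕ))
      ∧ (∀ i, i + 1 < L → urel D (f i) (f (i + 1)))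
      ∧ f 0 ∈ lowSet n D ∧ f (L - 1) ∈ lowSet n D) →
      ∃ g ∈ (univ : Finset (Fin L → Fin n)), R g D := by
    intro D ⟨f, hinj, hch, hl0, hl1⟩
    refine ⟨fun j => f j.1, Finset.mem_univ _, ?_⟩
    have hagree : ∀ i, i < L → fg (fun j => f j.1) i = f i := by
      intro i hi
      rw [hfg]
      simp only
      congr 1
      omega
    rw [hR]
    refine ⟨?_, ?_, ?_, ?_⟩
    · intro i hi j hj hij
      rw [Set.mem_Iio] at hi hj
      rw [hagree i hi, hagree j hj] at hij
      exact hinj (Set.mem_Iio.2 hi) (Set.mem_Iio.2 hj) hij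
    · intro i hi
      rw [hagree i (by omega), hagree (i + 1) (by omega)]
      exact hch i hi
    · rw [hagree 0 (by omega)]; exact hl0
    · rw [hagree (L - 1) (by omega)]; exact hl1
  refine (dnp_exists_le h0 h1 univ R _ hwit).trans ?_
  have hbd : ∀ g : Fin L → Fin n, dnpProb n p (R g)
      ≤ (2 * p) ^ (L - 1) * (2 * binTail p (n - L) K) ^ 2 := by
    intro g
    by_cases hinj : Set.InjOn (fg g) (Set.Iio (L : ℕ))
    · refine (dnp_mono h0 h1 (fun D hD => ?_)).trans
        (prob_path_event h0 h1 hL2 hL5 hK (fg g) hinj)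
      rw [hR] at hD
      exact ⟨hD.2.1, hD.2.2.1, hD.2.2.2⟩
    · rw [dnp_of_false (fun D hD => hinj (hR ▸ hD).1)]
      have := binTail_nonneg h0 h1 (n - L) K
      positivity
  calc ∑ g : Fin L → Fin n, dnpProb n p (R g)
      ≤ ∑ _g : Fin L → Fin n, (2 * p) ^ (L - 1) * (2 * binTail p (n - L) K) ^ 2 :=
        Finset.sum_le_sum fun g _ => hbd g
    _ = (n : ℝ) ^ L * ((2 * p) ^ (L - 1) * (2 * binTail p (n - L) K) ^ 2) := by
        rw [Finset.sum_const, Finset.card_univ, Fintype.card_fun, Fintype.card_fin,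
          Fintype.card_fin, nsmul_eq_mul, Nat.cast_pow]

open scoped Classical in
lemma prob_badcycleL (h0 : 0 ≤ p) (h1 : p ≤ 1) {K : ℕ}
    (hK : Real.log n / 20 ≤ (K : ℝ) + 1) {L : ℕ} (hL3 : 3 ≤ L) (hL4 : L ≤ 4) :
    dnpProb n p (fun D => ∃ f : ℕ → Fin n, Set.InjOn f (Set.Iio (L : ℕ))
        ∧ (∀ i, i + 1 < L → urel D (f i) (f (i + 1))) ∧ urel D (f (L - 1)) (f 0)
        ∧ ∃ j, j < L ∧ f j ∈ lowSet n D)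
      ≤ (n : ℝ) ^ L * (L : ℝ) * ((2 * p) ^ L * (2 * binTail p (n - L) K)) := by
  classical
  set fg : (Fin L → Fin n) → ℕ → Fin n :=
    fun g i => g ⟨min i (L - 1), by omega⟩ with hfg
  set R : (Fin L → Fin n) × ℕ → Finset (Eg n) → Prop := fun gj D =>
    Set.InjOn (fg gj.1) (Set.Iio (L : ℕ))
      ∧ (∀ i, i + 1 < L → urel D (fg gj.1 i) (fg gj.1 (i + 1)))
      ∧ urel D (fg gj.1 (L - 1)) (fg gj.1 0) ∧ fg gj.1 gj.2 ∈ lowSet n D with hR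
  have hwit : ∀ D, (∃ f : ℕ → Fin n, Set.InjOn f (Set.Iio (L : ℕ))
      ∧ (∀ i, i + 1 < L → urel D (f i) (f (i + 1))) ∧ urel D (f (L - 1)) (f 0)
      ∧ ∃ j, j < L ∧ f j ∈ lowSet n D) →
      ∃ gj ∈ (univ : Finset (Fin L → Fin n)) ×ˢ Finset.range L, R gj D := by
    intro D ⟨f, hinj, hch, hwr, j, hj, hlow⟩
    refine ⟨(fun j' => f j'.1, j), Finset.mem_product.2
      ⟨Finset.mem_univ _, Finset.mem_range.2 hj⟩, ?_⟩
    have hagree : ∀ i, i < L → fg (fun j' => f j'.1) i = f i := by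
      intro i hi
      rw [hfg]
      simp only
      congr 1
      omega
    rw [hR]
    refine ⟨?_, ?_, ?_, ?_⟩
    · intro i hi j' hj' hij
      rw [Set.mem_Iio] at hi hj'
      rw [hagree i hi, hagree j' hj'] at hij
      exact hinj (Set.mem_Iio.2 hi) (Set.mem_Iio.2 hj') hij
    · intro i hi
      rw [hagree i (by omega), hagree (i + 1) (by omega)]
      exact hch i hi
    · rw [hagree (L - 1) (by omega), hagree 0 (by omega)]; exact hwr
    · rw [hagree j (by omega)]; exact hlow
  refine (dnp_exists_le h0 h1 _ R _ hwit).trans ?_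
  have hbd : ∀ gj : (Fin L → Fin n) × ℕ, gj ∈ (univ : Finset (Fin L → Fin n)) ×ˢ Finset.range L →
      dnpProb n p (R gj)
      ≤ (2 * p) ^ L * (2 * binTail p (n - L) K) := by
    intro gj hgj
    have hj : gj.2 < L := Finset.mem_range.1 (Finset.mem_product.1 hgj).2
    by_cases hinj : Set.InjOn (fg gj.1) (Set.Iio (L : ℕ))
    · refine (dnp_mono h0 h1 (fun D hD => ?_)).trans
        (prob_cycle_event h0 h1 hL3 hL4 hK (fg gj.1) hinj hj)
      rw [hR] at hD
      exact ⟨hD.2.1, hD.2.2.1, hD.2.2.2⟩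
    · rw [dnp_of_false (fun D hD => hinj (hR ▸ hD).1)]
      have := binTail_nonneg h0 h1 (n - L) K
      positivity
  calc ∑ gj ∈ (univ : Finset (Fin L → Fin n)) ×ˢ Finset.range L, dnpProb n p (R gj)
      ≤ ∑ _gj ∈ (univ : Finset (Fin L → Fin n)) ×ˢ Finset.range L,
          (2 * p) ^ L * (2 * binTail p (n - L) K) :=
        Finset.sum_le_sum hbd
    _ = (n : ℝ) ^ L * (L : ℝ) * ((2 * p) ^ L * (2 * binTail p (n - L) K)) := by
        rw [Finset.sum_const, Finset.card_product, Finset.card_univ, Fintype.card_fun,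
          Fintype.card_fin, Fintype.card_fin, Finset.card_range, nsmul_eq_mul]
        push_cast
        ring

open scoped Classical in
lemma prob_badtwocycle (h0 : 0 ≤ p) (h1 : p ≤ 1) {K : ℕ}
    (hK : Real.log n / 20 ≤ (K : ℝ) + 1) :
    dnpProb n p (fun D => ∃ a b : Fin n, a ≠ b ∧ drel D a b ∧ drel D b a
        ∧ (a ∈ lowSet n D ∨ b ∈ lowSet n D))
      ≤ 2 * (n : ℝ) ^ 2 * (p ^ 2 * (2 * binTail p (n - 2) K)) := by
  classical
  set R : (Fin n × Fin n) × ℕ → Finset (Eg n) → Prop := fun abc D =>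
    abc.1.1 ≠ abc.1.2 ∧ drel D abc.1.1 abc.1.2 ∧ drel D abc.1.2 abc.1.1
      ∧ (if abc.2 = 0 then abc.1.1 else abc.1.2) ∈ lowSet n D with hR
  have hwit : ∀ D, (∃ a b : Fin n, a ≠ b ∧ drel D a b ∧ drel D b a
      ∧ (a ∈ lowSet n D ∨ b ∈ lowSet n D)) →
      ∃ abc ∈ ((univ : Finset (Fin n × Fin n)) ×ˢ Finset.range 2), R abc D := by
    intro D ⟨a, b, hab, h1', h2', hor⟩
    rcases hor with hlow | hlow
    · exact ⟨((a, b), 0), Finset.mem_product.2 ⟨Finset.mem_univ _, by simp⟩,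
        hab, h1', h2', by simpa using hlow⟩
    · exact ⟨((a, b), 1), Finset.mem_product.2 ⟨Finset.mem_univ _, by simp⟩,
        hab, h1', h2', by simpa using hlow⟩
  refine (dnp_exists_le h0 h1 _ R _ hwit).trans ?_
  have hbd : ∀ abc : (Fin n × Fin n) × ℕ,
      dnpProb n p (R abc) ≤ p ^ 2 * (2 * binTail p (n - 2) K) := by
    intro abc
    by_cases hab : abc.1.1 ≠ abc.1.2
    · refine (dnp_mono h0 h1 (fun D hD => ?_)).trans
        (prob_twocycle_event h0 h1 hK hab (u := if abc.2 = 0 then abc.1.1 else abc.1.2)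
          (by by_cases h : abc.2 = 0 <;> simp [h]))
      rw [hR] at hD
      exact ⟨hD.2.1, hD.2.2.1, hD.2.2.2⟩
    · rw [dnp_of_false (fun D hD => hab (hR ▸ hD).1)]
      have := binTail_nonneg h0 h1 (n - 2) K
      positivity
  calc ∑ abc ∈ ((univ : Finset (Fin n × Fin n)) ×ˢ Finset.range 2), dnpProb n p (R abc)
      ≤ ∑ _abc ∈ ((univ : Finset (Fin n × Fin n)) ×ˢ Finset.range 2),
          p ^ 2 * (2 * binTail p (n - 2) K) :=
        Finset.sum_le_sum fun abc _ => hbd abc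
    _ = 2 * (n : ℝ) ^ 2 * (p ^ 2 * (2 * binTail p (n - 2) K)) := by
        rw [Finset.sum_const, Finset.card_product, Finset.card_univ, Finset.card_range,
          nsmul_eq_mul]
        have : Fintype.card (Fin n × Fin n) = n * n := by
          rw [Fintype.card_prod, Fintype.card_fin]
        rw [this]
        push_cast
        ring

open scoped Classical in
lemma lowSet_ncard_eq (D : Finset (Eg n)) :
    (lowSet n D).ncard = (univ.filter (fun v => v ∈ lowSet n D)).card := by
  conv_lhs => rw [show lowSet n D = ↑(univ.filter (fun v => v ∈ lowSet n D)) from by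
    ext v; simp]
  rw [Set.ncard_coe_finset]

end UnionBounds


/-! ### Analytic estimates -/

section Analytic

/-- The edge probability. -/
noncomputable def pn (n : ℕ) : ℝ := 7 * Real.log n / (8 * n)

/-- The degree threshold. -/
noncomputable def Kn (n : ℕ) : ℕ := ⌊Real.log n / 20⌋₊

lemma log_nat_nonneg (n : ℕ) : 0 ≤ Real.log n := by
  rcases Nat.eq_zero_or_pos n with rfl | hn
  · simp
  · exact Real.log_nonneg (by exact_mod_cast hn)

lemma pn_nonneg (n : ℕ) : 0 ≤ pn n := by
  have h1 := log_nat_nonneg n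
  have h2 : (0:ℝ) ≤ 8 * n := by positivity
  exact div_nonneg (by linarith) h2

lemma pn_le_one (n : ℕ) : pn n ≤ 1 := by
  rcases Nat.eq_zero_or_pos n with rfl | hn
  · simp [pn]
  · have hn0 : (0:ℝ) < n := by exact_mod_cast hn
    have h1 : Real.log n ≤ (n:ℝ) - 1 := Real.log_le_sub_one_of_pos hn0
    rw [pn, div_le_one (by positivity)]
    linarith

lemma Kn_le (n : ℕ) : (Kn n : ℝ) ≤ Real.log n / 20 :=
  Nat.floor_le (by linarith [log_nat_nonneg n])

lemma Kn_ge (n : ℕ) : Real.log n / 20 - 1 ≤ (Kn n : ℝ) := by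
  have := Nat.lt_floor_add_one (Real.log n / 20)
  rw [Kn]
  linarith

lemma hK_Kn (n : ℕ) : Real.log n / 20 ≤ (Kn n : ℝ) + 1 :=
  le_of_lt (Nat.lt_floor_add_one _)

lemma pow_div_factorial_mono {y : ℝ} (hy0 : 0 ≤ y) :
    ∀ K : ℕ, (K:ℝ) ≤ y → ∀ j, j ≤ K →
      y ^ j / (j.factorial : ℝ) ≤ y ^ K / (K.factorial : ℝ) := by
  intro K
  induction K with
  | zero =>
    intro _ j hj
    have : j = 0 := by omega
    subst this
    exact le_rfl
  | succ K ih =>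
    intro hyK j hj
    rcases Nat.lt_or_ge j (K + 1) with h | h
    · have hj' : j ≤ K := by omega
      have hyK' : (K:ℝ) ≤ y := by
        have : ((K:ℝ)) ≤ (K:ℝ) + 1 := by linarith
        calc (K:ℝ) ≤ (K:ℝ) + 1 := this
          _ = ((K + 1 : ℕ) : ℝ) := by push_cast; ring
          _ ≤ y := hyK
      refine (ih hyK' j hj').trans ?_
      have hKf : (0:ℝ) < (K.factorial : ℝ) := by exact_mod_cast K.factorial_pos
      have hK1y : (K:ℝ) + 1 ≤ y := by
        calc (K:ℝ) + 1 = ((K + 1 : ℕ) : ℝ) := by push_cast; ring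
          _ ≤ y := hyK
      rw [Nat.factorial_succ, pow_succ]
      push_cast
      rw [div_le_div_iff₀ hKf (by positivity)]
      have hyKnn : (0:ℝ) ≤ y ^ K := pow_nonneg hy0 K
      nlinarith [mul_nonneg hyKnn hKf.le]
    · have : j = K + 1 := by omega
      subst this
      exact le_rfl

lemma log18_le : (18:ℝ) ≤ Real.exp (29/10) := by
  have h1 : (18:ℝ) ^ (10:ℕ) ≤ (2718/1000:ℝ) ^ (29:ℕ) := by norm_num
  have h2 : (2718/1000:ℝ) ≤ Real.exp 1 := by
    have := Real.exp_one_gt_d9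
    norm_num at this ⊢
    linarith
  have h3 : (2718/1000:ℝ) ^ (29:ℕ) ≤ (Real.exp 1) ^ (29:ℕ) :=
    pow_le_pow_left₀ (by norm_num) h2 29
  have h4 : (Real.exp 1) ^ (29:ℕ) = (Real.exp (29/10)) ^ (10:ℕ) := by
    rw [← Real.exp_nat_mul, ← Real.exp_nat_mul]
    norm_num
  refine le_of_pow_le_pow_left₀ (n := 10) (by norm_num) (Real.exp_nonneg _) ?_
  calc (18:ℝ) ^ (10:ℕ) ≤ (2718/1000:ℝ) ^ (29:ℕ) := h1
    _ ≤ (Real.exp 1) ^ (29:ℕ) := h3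
    _ = (Real.exp (29/10)) ^ (10:ℕ) := h4

set_option maxHeartbeats 1000000 in
lemma binTail_bound {n m : ℕ} (hn6 : 10 ^ 6 ≤ n) (hx30 : (30400:ℝ) ≤ Real.log n)
    (hm5 : n - 5 ≤ m) (hm1 : m ≤ n - 1) :
    binTail (pn n) m (Kn n) ≤ (n:ℝ) ^ (-(27/40 : ℝ)) := by
  have hn5 : (5:ℕ) ≤ n := by omega
  set x := Real.log n with hxdef
  set K := Kn n with hKdef
  set p := pn n with hpdef
  have hx0 : (0:ℝ) < x := by linarith
  have hn0 : (0:ℝ) < n := by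
    have : (0:ℕ) < n := by omega
    exact_mod_cast this
  have hp0 : 0 ≤ p := pn_nonneg n
  have hp1 : p ≤ 1 := pn_le_one n
  have hq0 : (0:ℝ) ≤ 1 - p := by linarith
  have hKx : (K:ℝ) ≤ x / 20 := Kn_le n
  have hKx' : x / 20 - 1 ≤ (K:ℝ) := Kn_ge n
  -- square root bounds
  have hsqnn : (0:ℝ) ≤ Real.sqrt n := Real.sqrt_nonneg _
  have hsqn : Real.sqrt n * Real.sqrt n = (n:ℝ) := Real.mul_self_sqrt hn0.le
  have hsq : x ≤ 2 * Real.sqrt n := by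
    have h := Real.log_le_sub_one_of_pos (x := Real.sqrt n) (by positivity)
    have hlog : Real.log (Real.sqrt n) = x / 2 := by
      rw [Real.log_sqrt hn0.le]
    rw [hlog] at h
    linarith
  have hsq1000 : (1000:ℝ) ≤ Real.sqrt n := by
    have h1 : ((10:ℝ) ^ 6) ≤ (n:ℝ) := by exact_mod_cast hn6
    nlinarith [hsqn, hsqnn]
  have hK700 : (K:ℝ) + 5 ≤ (n:ℝ) / 700 := by
    have h1 : (K:ℝ) ≤ Real.sqrt n / 10 := by
      calc (K:ℝ) ≤ x / 20 := hKx
        _ ≤ 2 * Real.sqrt n / 20 := by linarith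
        _ = Real.sqrt n / 10 := by ring
    nlinarith [hsq1000, hsqn, hsqnn]
  have hm0 : (n:ℝ) - 5 ≤ (m:ℝ) := by
    have h := Nat.cast_le (α := ℝ) |>.2 hm5
    rw [Nat.cast_sub hn5] at h
    simpa using h
  have hmn : (m:ℝ) ≤ (n:ℝ) := by
    have : m ≤ n := by omega
    exact_mod_cast this
  have hKm : K ≤ m := by
    have h1 : (K:ℝ) ≤ (m:ℝ) := by
      have hn700 : (n:ℝ)/700 ≤ (n:ℝ) - 5 := by nlinarith [hsq1000, hsqn]
      linarith
    exact_mod_cast h1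
  set y : ℝ := 7 * x / 8 with hydef
  have hy0 : (0:ℝ) ≤ y := by positivity
  have hpn : p = 7 * x / (8 * n) := rfl
  have hmp_le : (m:ℝ) * p ≤ y := by
    rw [hpn, hydef]
    rw [mul_div_assoc']
    rw [div_le_div_iff₀ (by positivity) (by norm_num)]
    nlinarith [hx0.le]
  have hKy : (K:ℝ) ≤ y := by
    rw [hydef]
    linarith
  have hterm : ∀ j ∈ Finset.range (K + 1), (m.choose j : ℝ) * p ^ j * (1 - p) ^ (m - j)
      ≤ y ^ K / (K.factorial : ℝ) * (1 - p) ^ (m - K) := by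
    intro j hj
    rw [Finset.mem_range] at hj
    have hjK : j ≤ K := by omega
    have h1 : (m.choose j : ℝ) * p ^ j ≤ y ^ j / (j.factorial : ℝ) := by
      have hc : (m.choose j : ℝ) ≤ (m:ℝ) ^ j / (j.factorial : ℝ) := Nat.choose_le_pow_div j m
      have hstep : (m.choose j : ℝ) * p ^ j ≤ (m:ℝ) ^ j / (j.factorial : ℝ) * p ^ j :=
        mul_le_mul_of_nonneg_right hc (pow_nonneg hp0 j)
      refine hstep.trans ?_
      rw [div_mul_eq_mul_div, ← mul_pow]
      have hfj : (0:ℝ) < (j.factorial : ℝ) := by exact_mod_cast j.factorial_pos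
      exact (div_le_div_iff_of_pos_right hfj).2 (pow_le_pow_left₀ (by positivity) hmp_le j)
    have h2 : y ^ j / (j.factorial : ℝ) ≤ y ^ K / (K.factorial : ℝ) :=
      pow_div_factorial_mono hy0 K hKy j hjK
    have h3 : (1 - p) ^ (m - j) ≤ (1 - p) ^ (m - K) :=
      pow_le_pow_of_le_one hq0 (by linarith) (by omega)
    calc (m.choose j : ℝ) * p ^ j * (1 - p) ^ (m - j)
        ≤ y ^ j / (j.factorial : ℝ) * (1 - p) ^ (m - j) :=
          mul_le_mul_of_nonneg_right h1 (pow_nonneg hq0 _)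
      _ ≤ y ^ K / (K.factorial : ℝ) * (1 - p) ^ (m - K) := by
          refine mul_le_mul h2 h3 (pow_nonneg hq0 _) ?_
          positivity
  have hsum : binTail p m K ≤ ((K:ℝ) + 1) * (y ^ K / (K.factorial : ℝ)) * (1 - p) ^ (m - K) := by
    calc binTail p m K
        ≤ ∑ _j ∈ Finset.range (K + 1), y ^ K / (K.factorial : ℝ) * (1 - p) ^ (m - K) :=
          Finset.sum_le_sum hterm
      _ = ((K:ℝ) + 1) * (y ^ K / (K.factorial : ℝ)) * (1 - p) ^ (m - K) := by
          rw [Finset.sum_const, Finset.card_range, nsmul_eq_mul]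
          push_cast
          ring
  have hK1 : (1:ℝ) ≤ (K:ℝ) := by linarith
  have hKpos : (0:ℝ) < (K:ℝ) := by linarith
  have hfacpos : (0:ℝ) < (K.factorial : ℝ) := by exact_mod_cast K.factorial_pos
  have hstep4 : y ^ K / (K.factorial : ℝ) ≤ (18:ℝ) ^ K * Real.exp K := by
    have hKexp := Real.pow_div_factorial_le_exp (x := (K:ℝ)) hKpos.le K
    have hyK18 : y ≤ 18 * (K:ℝ) := by
      rw [hydef]
      linarith [hKx', hx30]
    have hKK : (0:ℝ) < (K:ℝ) ^ K := pow_pos hKpos K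
    have h5 : y ^ K ≤ (18:ℝ) ^ K * (K:ℝ) ^ K := by
      rw [← mul_pow]
      exact pow_le_pow_left₀ hy0 hyK18 K
    have h6 : (K:ℝ) ^ K ≤ Real.exp K * (K.factorial : ℝ) := by
      rw [div_le_iff₀ hfacpos] at hKexp
      exact hKexp
    rw [div_le_iff₀ hfacpos]
    calc y ^ K ≤ (18:ℝ) ^ K * (K:ℝ) ^ K := h5
      _ ≤ (18:ℝ) ^ K * (Real.exp K * (K.factorial : ℝ)) := by
          refine mul_le_mul_of_nonneg_left h6 (by positivity)
      _ = (18:ℝ) ^ K * Real.exp K * (K.factorial : ℝ) := by ring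
  have h18exp : (18:ℝ) ^ K ≤ Real.exp ((29/10) * K) := by
    calc (18:ℝ) ^ K ≤ (Real.exp (29/10)) ^ K := pow_le_pow_left₀ (by norm_num) log18_le K
      _ = Real.exp ((29/10) * K) := by
        rw [← Real.exp_nat_mul]
        ring_nf
  have h1p : (1 - p) ^ (m - K) ≤ Real.exp (-(p * ((m:ℝ) - K))) := by
    have hb : 1 - p ≤ Real.exp (-p) := by
      have := Real.add_one_le_exp (-p)
      linarith
    calc (1 - p) ^ (m - K) ≤ (Real.exp (-p)) ^ (m - K) := pow_le_pow_left₀ hq0 hb _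
      _ = Real.exp (((m - K : ℕ):ℝ) * (-p)) := by rw [← Real.exp_nat_mul]
      _ = Real.exp (-(p * ((m:ℝ) - K))) := by
          rw [Nat.cast_sub hKm]
          ring_nf
  have hKplus : (K:ℝ) + 1 ≤ Real.exp (x / 400) := by
    have h800 : Real.exp (x / 400) = (Real.exp (x / 800)) ^ 2 := by
      rw [sq, ← Real.exp_add]
      ring_nf
    have hb : x / 800 + 1 ≤ Real.exp (x / 800) := Real.add_one_le_exp _
    have hsqb : (x / 800 + 1) ^ 2 ≤ (Real.exp (x / 800)) ^ 2 :=
      pow_le_pow_left₀ (by positivity) hb 2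
    rw [h800]
    nlinarith [hKx, hx30]
  have hpmK : (7 * x / 8) * (699/700) ≤ p * ((m:ℝ) - K) := by
    have hge : (n:ℝ) * (699/700) ≤ (m:ℝ) - K := by
      have : (5:ℝ) + K ≤ n / 700 := by linarith
      linarith
    have hp' : p * ((m:ℝ) - K) = (7 * x / (8 * n)) * ((m:ℝ) - K) := by rw [hpn]
    rw [hp']
    have h2 : (7 * x / (8 * n)) * ((n:ℝ) * (699/700)) = (7 * x / 8) * (699/700) := by
      field_simp
    calc (7 * x / 8) * (699/700) = (7 * x / (8 * n)) * ((n:ℝ) * (699/700)) := h2.symm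
      _ ≤ (7 * x / (8 * n)) * ((m:ℝ) - K) := by
          refine mul_le_mul_of_nonneg_left hge (by positivity)
  have hexpsum : Real.exp (x/400) * Real.exp ((29/10) * K) * Real.exp K
      * Real.exp (-(p * ((m:ℝ) - K))) ≤ Real.exp (-(27/40) * x) := by
    rw [← Real.exp_add, ← Real.exp_add, ← Real.exp_add]
    refine Real.exp_le_exp.2 ?_
    have hKterm : (29/10) * (K:ℝ) + K ≤ (39/10) * (x/20) := by nlinarith [hKx]
    nlinarith [hpmK, hKx, hx0.le]
  have hrpow : (n:ℝ) ^ (-(27/40 : ℝ)) = Real.exp (-(27/40) * x) := by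
    rw [Real.rpow_def_of_pos hn0, ← hxdef]
    ring_nf
  rw [hrpow]
  calc binTail p m K
      ≤ ((K:ℝ) + 1) * (y ^ K / (K.factorial : ℝ)) * (1 - p) ^ (m - K) := hsum
    _ ≤ Real.exp (x/400) * ((18:ℝ) ^ K * Real.exp K) * Real.exp (-(p * ((m:ℝ) - K))) := by
        refine mul_le_mul (mul_le_mul hKplus hstep4 (by positivity) (by positivity))
          h1p (by positivity) (by positivity)
    _ ≤ Real.exp (x/400) * (Real.exp ((29/10) * K) * Real.exp K)
        * Real.exp (-(p * ((m:ℝ) - K))) := by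
        refine mul_le_mul_of_nonneg_right ?_ (by positivity)
        refine mul_le_mul_of_nonneg_left ?_ (by positivity)
        exact mul_le_mul_of_nonneg_right h18exp (by positivity)
    _ = Real.exp (x/400) * Real.exp ((29/10) * K) * Real.exp K
        * Real.exp (-(p * ((m:ℝ) - K))) := by ring
    _ ≤ Real.exp (-(27/40) * x) := hexpsum

end Analytic


/-! ### Final assembly -/

section Final

open Filter

/-- The good event. -/
def GoodP (n : ℕ) (D : Finset (Eg n)) : Prop :=
  (∀ l : List (Fin n), ¬ IsSPath D (lowSet n D) l) ∧
  (∀ l : List (Fin n), ¬ IsSCycle D (lowSet n D) l) ∧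
  ((lowSet n D).ncard : ℝ) ≤ (n : ℝ) ^ ((1 : ℝ) / 3)

/-- The failure probability. -/
noncomputable def Fail (n : ℕ) : ℝ := dnpProb n (pn n) (fun D => ¬ GoodP n D)

def PathBad (n : ℕ) (D : Finset (Eg n)) : Prop := ∃ l, IsSPath D (lowSet n D) l

def CycTwoBad (n : ℕ) (D : Finset (Eg n)) : Prop :=
  ∃ a b : Fin n, a ≠ b ∧ drel D a b ∧ drel D b a ∧ (a ∈ lowSet n D ∨ b ∈ lowSet n D)

def CycGenBad (n : ℕ) (D : Finset (Eg n)) : Prop :=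
  ∃ L, 3 ≤ L ∧ L ≤ 4 ∧ ∃ f : ℕ → Fin n, Set.InjOn f (Set.Iio (L : ℕ))
    ∧ (∀ i, i + 1 < L → urel D (f i) (f (i + 1))) ∧ urel D (f (L - 1)) (f 0)
    ∧ ∃ j, j < L ∧ f j ∈ lowSet n D

def SizeBad (n : ℕ) (D : Finset (Eg n)) : Prop :=
  ¬ (((lowSet n D).ncard : ℝ) ≤ (n : ℝ) ^ ((1 : ℝ) / 3))

lemma dnp_or {n : ℕ} {p : ℝ} (h0 : 0 ≤ p) (h1 : p ≤ 1) (P Q : Finset (Eg n) → Prop) :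
    dnpProb n p (fun D => P D ∨ Q D) ≤ dnpProb n p P + dnpProb n p Q := by
  rw [dnpProb_eq_PrOn, dnpProb_eq_PrOn, dnpProb_eq_PrOn]
  exact PrOn_or_le h0 h1 P Q

set_option maxHeartbeats 2000000 in
lemma Fail_le (n : ℕ) (hn6 : 10 ^ 6 ≤ n) (hx30 : (30400:ℝ) ≤ Real.log n) :
    Fail n ≤ 256 * (Real.log n) ^ 4 * ((n:ℝ) * ((n:ℝ) ^ (-(27/40 : ℝ))) ^ 2)
      + (4 * (Real.log n) ^ 2 * (n:ℝ) ^ (-(27/40 : ℝ))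
        + 256 * (Real.log n) ^ 4 * (n:ℝ) ^ (-(27/40 : ℝ)))
      + 2 * (n:ℝ) ^ ((2:ℝ)/3) * (n:ℝ) ^ (-(27/40 : ℝ)) := by
  classical
  have hp0 : 0 ≤ pn n := pn_nonneg n
  have hp1 : pn n ≤ 1 := pn_le_one n
  have hK : Real.log n / 20 ≤ (Kn n : ℝ) + 1 := hK_Kn n
  set x := Real.log n with hxdef
  set q : ℝ := (n:ℝ) ^ (-(27/40 : ℝ)) with hqdef
  have hn0 : (0:ℝ) < n := by
    have : (0:ℕ) < n := by omega
    exact_mod_cast this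
  have hq0 : 0 ≤ q := Real.rpow_nonneg hn0.le _
  have hx0 : (0:ℝ) < x := by linarith
  have hnp : (n:ℝ) * pn n = 7 * x / 8 := by
    rw [show pn n = 7 * x / (8 * n) from rfl]
    field_simp
  have hbt : ∀ m : ℕ, n - 5 ≤ m → m ≤ n - 1 → binTail (pn n) m (Kn n) ≤ q :=
    fun m h5 h1' => binTail_bound hn6 hx30 h5 h1'
  have hbt0 : ∀ m : ℕ, 0 ≤ binTail (pn n) m (Kn n) :=
    fun m => binTail_nonneg hp0 hp1 m _
  have h2x1 : (1:ℝ) ≤ 2 * x := by linarith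
  -- path bound
  have hPath : dnpProb n (pn n) (PathBad n) ≤ 256 * x ^ 4 * ((n:ℝ) * q ^ 2) := by
    have h1 : dnpProb n (pn n) (PathBad n)
        ≤ ∑ L ∈ Finset.Icc 2 5, dnpProb n (pn n)
            (fun D => ∃ f : ℕ → Fin n, Set.InjOn f (Set.Iio (L : ℕ))
              ∧ (∀ i, i + 1 < L → urel D (f i) (f (i + 1)))
              ∧ f 0 ∈ lowSet n D ∧ f (L - 1) ∈ lowSet n D) := by
      refine dnp_exists_le hp0 hp1 _ _ _ (fun D hD => ?_)
      obtain ⟨l, hl⟩ := hD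
      obtain ⟨L, hL2, hL5, f, hinj, hch, h0', h1'⟩ := spath_witness hl
      exact ⟨L, Finset.mem_Icc.2 ⟨hL2, hL5⟩, f, hinj, hch, h0', h1'⟩
    refine h1.trans ?_
    have h2 : ∀ L ∈ Finset.Icc 2 5, dnpProb n (pn n)
        (fun D => ∃ f : ℕ → Fin n, Set.InjOn f (Set.Iio (L : ℕ))
          ∧ (∀ i, i + 1 < L → urel D (f i) (f (i + 1)))
          ∧ f 0 ∈ lowSet n D ∧ f (L - 1) ∈ lowSet n D)
        ≤ 64 * x ^ 4 * ((n:ℝ) * q ^ 2) := by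
      intro L hL
      obtain ⟨hL2, hL5⟩ := Finset.mem_Icc.1 hL
      refine (prob_badpathL hp0 hp1 hK hL2 hL5).trans ?_
      have hbtL : binTail (pn n) (n - L) (Kn n) ≤ q := hbt _ (by omega) (by omega)
      have hnL : (n:ℝ) ^ L = (n:ℝ) * (n:ℝ) ^ (L - 1) := by
        conv_lhs => rw [show L = (L - 1) + 1 from by omega]
        rw [pow_succ]
        ring
      have hcomb : (n:ℝ) ^ (L - 1) * (2 * pn n) ^ (L - 1) = (7 * x / 4) ^ (L - 1) := by
        rw [← mul_pow]
        congr 1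
        rw [show (n:ℝ) * (2 * pn n) = 2 * ((n:ℝ) * pn n) from by ring, hnp]
        ring
      have hpow : (7 * x / 4) ^ (L - 1) ≤ 16 * x ^ 4 := by
        calc (7 * x / 4) ^ (L - 1) ≤ (2 * x) ^ (L - 1) :=
              pow_le_pow_left₀ (by positivity) (by linarith) _
          _ ≤ (2 * x) ^ 4 := pow_le_pow_right₀ h2x1 (by omega)
          _ = 16 * x ^ 4 := by ring
      have hsq : (2 * binTail (pn n) (n - L) (Kn n)) ^ 2 ≤ 4 * q ^ 2 := by
        have h' : (2 * binTail (pn n) (n - L) (Kn n)) ^ 2 ≤ (2 * q) ^ 2 :=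
          pow_le_pow_left₀ (by linarith [hbt0 (n - L)]) (by linarith) 2
        calc (2 * binTail (pn n) (n - L) (Kn n)) ^ 2 ≤ (2 * q) ^ 2 := h'
          _ = 4 * q ^ 2 := by ring
      calc (n:ℝ) ^ L * ((2 * pn n) ^ (L - 1) * (2 * binTail (pn n) (n - L) (Kn n)) ^ 2)
          = ((n:ℝ) ^ (L - 1) * (2 * pn n) ^ (L - 1))
            * ((n:ℝ) * (2 * binTail (pn n) (n - L) (Kn n)) ^ 2) := by
            rw [hnL]; ring
        _ ≤ (16 * x ^ 4) * ((n:ℝ) * (4 * q ^ 2)) := by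
            refine mul_le_mul (hcomb ▸ hpow) ?_ (by positivity) (by positivity)
            exact mul_le_mul_of_nonneg_left hsq hn0.le
        _ = 64 * x ^ 4 * ((n:ℝ) * q ^ 2) := by ring
    refine (Finset.sum_le_sum h2).trans (le_of_eq ?_)
    rw [Finset.sum_const, Nat.card_Icc, nsmul_eq_mul]
    norm_num
    ring
  -- general cycle bound
  have hCycGen : dnpProb n (pn n) (CycGenBad n) ≤ 256 * x ^ 4 * q := by
    have h1 : dnpProb n (pn n) (CycGenBad n)
        ≤ ∑ L ∈ Finset.Icc 3 4, dnpProb n (pn n)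
            (fun D => ∃ f : ℕ → Fin n, Set.InjOn f (Set.Iio (L : ℕ))
              ∧ (∀ i, i + 1 < L → urel D (f i) (f (i + 1))) ∧ urel D (f (L - 1)) (f 0)
              ∧ ∃ j, j < L ∧ f j ∈ lowSet n D) := by
      refine dnp_exists_le hp0 hp1 _ _ _ (fun D hD => ?_)
      obtain ⟨L, hL3, hL4, rest⟩ := hD
      exact ⟨L, Finset.mem_Icc.2 ⟨hL3, hL4⟩, rest⟩
    refine h1.trans ?_
    have h2 : ∀ L ∈ Finset.Icc 3 4, dnpProb n (pn n)
        (fun D => ∃ f : ℕ → Fin n, Set.InjOn f (Set.Iio (L : ℕ))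
          ∧ (∀ i, i + 1 < L → urel D (f i) (f (i + 1))) ∧ urel D (f (L - 1)) (f 0)
          ∧ ∃ j, j < L ∧ f j ∈ lowSet n D)
        ≤ 128 * x ^ 4 * q := by
      intro L hL
      obtain ⟨hL3, hL4⟩ := Finset.mem_Icc.1 hL
      refine (prob_badcycleL hp0 hp1 hK hL3 hL4).trans ?_
      have hbtL : binTail (pn n) (n - L) (Kn n) ≤ q := hbt _ (by omega) (by omega)
      have hcomb : (n:ℝ) ^ L * (2 * pn n) ^ L = (7 * x / 4) ^ L := by
        rw [← mul_pow]
        congr 1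
        rw [show (n:ℝ) * (2 * pn n) = 2 * ((n:ℝ) * pn n) from by ring, hnp]
        ring
      have hpow : (7 * x / 4) ^ L ≤ 16 * x ^ 4 := by
        calc (7 * x / 4) ^ L ≤ (2 * x) ^ L :=
              pow_le_pow_left₀ (by positivity) (by linarith) _
          _ ≤ (2 * x) ^ 4 := pow_le_pow_right₀ h2x1 (by omega)
          _ = 16 * x ^ 4 := by ring
      have hL4' : (L:ℝ) ≤ 4 := by exact_mod_cast hL4
      calc (n:ℝ) ^ L * (L:ℝ) * ((2 * pn n) ^ L * (2 * binTail (pn n) (n - L) (Kn n)))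
          = ((n:ℝ) ^ L * (2 * pn n) ^ L)
            * ((L:ℝ) * (2 * binTail (pn n) (n - L) (Kn n))) := by ring
        _ ≤ (16 * x ^ 4) * (4 * (2 * q)) := by
            refine mul_le_mul (hcomb ▸ hpow)
              (mul_le_mul hL4' (by linarith [hbt0 (n - L)])
                (by linarith [hbt0 (n - L)]) (by norm_num))
              (mul_nonneg (by positivity) (by linarith [hbt0 (n - L)]))
              (by positivity)
        _ = 128 * x ^ 4 * q := by ring
    refine (Finset.sum_le_sum h2).trans (le_of_eq ?_)
    rw [Finset.sum_const, Nat.card_Icc, nsmul_eq_mul]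
    norm_num
    ring
  -- two-cycle bound
  have hCycTwo : dnpProb n (pn n) (CycTwoBad n) ≤ 4 * x ^ 2 * q := by
    refine (prob_badtwocycle hp0 hp1 hK).trans ?_
    have hbt2 : binTail (pn n) (n - 2) (Kn n) ≤ q := hbt _ (by omega) (by omega)
    have hnp2 : (n:ℝ) ^ 2 * (pn n) ^ 2 = (7 * x / 8) ^ 2 := by
      rw [← mul_pow, hnp]
    calc 2 * (n:ℝ) ^ 2 * ((pn n) ^ 2 * (2 * binTail (pn n) (n - 2) (Kn n)))
        = ((n:ℝ) ^ 2 * (pn n) ^ 2) * (2 * (2 * binTail (pn n) (n - 2) (Kn n))) := by ring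
      _ ≤ (7 * x / 8) ^ 2 * (2 * (2 * q)) := by
          rw [hnp2]
          refine mul_le_mul_of_nonneg_left (by linarith [hbt0 (n - 2)]) (by positivity)
      _ ≤ x ^ 2 * (4 * q) := by
          have h' : (7 * x / 8) ^ 2 ≤ x ^ 2 := by nlinarith [hx0.le]
          nlinarith [hq0, h', sq_nonneg x]
      _ = 4 * x ^ 2 * q := by ring
  -- size bound
  have hSize : dnpProb n (pn n) (SizeBad n) ≤ 2 * (n:ℝ) ^ ((2:ℝ)/3) * q := by
    have hcount := dnp_count hp0 hp1 (univ : Finset (Fin n))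
      (fun v D => v ∈ lowSet n D) (SizeBad n) ((n : ℝ) ^ ((1 : ℝ) / 3)) ?_
    · have hsum : ∑ v : Fin n, dnpProb n (pn n) (fun D => v ∈ lowSet n D)
          ≤ (n:ℝ) * (2 * q) := by
        have hbt1 : binTail (pn n) (n - 1) (Kn n) ≤ q := hbt _ (by omega) (by omega)
        calc ∑ v : Fin n, dnpProb n (pn n) (fun D => v ∈ lowSet n D)
            ≤ ∑ _v : Fin n, 2 * q := by
              refine Finset.sum_le_sum fun v _ => ?_
              refine (prob_low_vertex hp0 hp1 hK v).trans (by linarith)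
          _ = (n:ℝ) * (2 * q) := by
              rw [Finset.sum_const, Finset.card_univ, Fintype.card_fin, nsmul_eq_mul]
      have h13 : (0:ℝ) < (n:ℝ) ^ ((1:ℝ)/3) := Real.rpow_pos_of_pos hn0 _
      have hkey : (n:ℝ) ^ ((1:ℝ)/3) * (2 * (n:ℝ) ^ ((2:ℝ)/3) * q) = (n:ℝ) * (2 * q) := by
        rw [show (n:ℝ) ^ ((1:ℝ)/3) * (2 * (n:ℝ) ^ ((2:ℝ)/3) * q)
          = 2 * ((n:ℝ) ^ ((1:ℝ)/3) * (n:ℝ) ^ ((2:ℝ)/3)) * q from by ring,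
          ← Real.rpow_add hn0]
        norm_num
        ring
      refine (mul_le_mul_iff_of_pos_left h13).1 ?_
      rw [hkey]
      exact hcount.trans hsum
    · intro D hD
      have hlt : (n : ℝ) ^ ((1 : ℝ) / 3) < ((lowSet n D).ncard : ℝ) := by
        rw [SizeBad] at hD
        push_neg at hD
        exact hD
      rw [lowSet_ncard_eq] at hlt
      exact le_of_lt hlt
  -- combine
  have hm : ∀ D : Finset (Eg n), ¬ GoodP n D →
      (PathBad n D ∨ (CycTwoBad n D ∨ CycGenBad n D) ∨ SizeBad n D) := by
    intro D hD
    by_cases h1 : ∃ l, IsSPath D (lowSet n D) l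
    · exact Or.inl h1
    by_cases h2 : ∃ l, IsSCycle D (lowSet n D) l
    · refine Or.inr (Or.inl ?_)
      obtain ⟨l, hl⟩ := h2
      rcases scycle_witness hl with h | h
      · exact Or.inl h
      · exact Or.inr h
    by_cases h3 : ((lowSet n D).ncard : ℝ) ≤ (n : ℝ) ^ ((1 : ℝ) / 3)
    · exact absurd ⟨fun l hl => h1 ⟨l, hl⟩, fun l hl => h2 ⟨l, hl⟩, h3⟩ hD
    · exact Or.inr (Or.inr h3)
  have hsplit : Fail n ≤ dnpProb n (pn n) (PathBad n)
      + (dnpProb n (pn n) (fun D => CycTwoBad n D ∨ CycGenBad n D)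
        + dnpProb n (pn n) (SizeBad n)) := by
    refine (dnp_mono hp0 hp1 hm).trans ?_
    exact (dnp_or hp0 hp1 (PathBad n)
      (fun D => (CycTwoBad n D ∨ CycGenBad n D) ∨ SizeBad n D)).trans
      (add_le_add_right (dnp_or hp0 hp1 _ _) _)
  have hcyc : dnpProb n (pn n) (fun D => CycTwoBad n D ∨ CycGenBad n D)
      ≤ 4 * x ^ 2 * q + 256 * x ^ 4 * q :=
    (dnp_or hp0 hp1 _ _).trans (add_le_add hCycTwo hCycGen)
  calc Fail n ≤ _ := hsplit
    _ ≤ 256 * x ^ 4 * ((n:ℝ) * q ^ 2)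
        + ((4 * x ^ 2 * q + 256 * x ^ 4 * q) + 2 * (n:ℝ) ^ ((2:ℝ)/3) * q) := by
        refine add_le_add hPath (add_le_add hcyc hSize)
    _ = 256 * x ^ 4 * ((n:ℝ) * q ^ 2)
        + (4 * x ^ 2 * q + 256 * x ^ 4 * q)
        + 2 * (n:ℝ) ^ ((2:ℝ)/3) * q := by ring

lemma tendsto_log_pow_rpow (k : ℕ) (a : ℝ) (ha : 0 < a) :
    Filter.Tendsto (fun nn : ℕ => (Real.log nn) ^ k * (nn:ℝ) ^ (-a : ℝ))
      Filter.atTop (nhds 0) := by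
  have hreal : Filter.Tendsto (fun y : ℝ => (Real.log y) ^ k * y ^ (-a : ℝ))
      Filter.atTop (nhds 0) := by
    rcases Nat.eq_zero_or_pos k with rfl | hk
    · simpa using tendsto_rpow_neg_atTop ha
    · have hb : (0:ℝ) < a / k := by positivity
      have h1 : Filter.Tendsto (fun y : ℝ => Real.log y / y ^ (a / k : ℝ))
          Filter.atTop (nhds 0) :=
        (isLittleO_log_rpow_atTop hb).tendsto_div_nhds_zero
      have h2 := h1.pow k
      rw [zero_pow (by omega : k ≠ 0)] at h2
      refine Filter.Tendsto.congr' ?_ h2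
      filter_upwards [Filter.eventually_ge_atTop (1:ℝ)] with y hy
      have hy0 : (0:ℝ) < y := by linarith
      rw [div_pow, ← Real.rpow_natCast (y ^ (a / k : ℝ)) k, ← Real.rpow_mul hy0.le,
        show (a / k : ℝ) * k = a from by field_simp, Real.rpow_neg hy0.le,
        div_eq_mul_inv]
  exact hreal.comp tendsto_natCast_atTop_atTop

end Final

/-- **Lemma 7.7.**  For `p = 7 log n/(8n)`, almost surely in `D(n,p)`, with
`S = {v : d⁺(v) < log n/20 or d⁻(v) < log n/20}`, there are no `S`-paths or `S`-cycles and
`|S| ≤ n^(1/3)`. -/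
theorem no_S_paths_or_cycles :
    Filter.Tendsto
      (fun n : ℕ => dnpProb n (7 * Real.log n / (8 * n)) (fun D : Finset (Eg n) =>
        (∀ l : List (Fin n), ¬ IsSPath D (lowSet n D) l) ∧
        (∀ l : List (Fin n), ¬ IsSCycle D (lowSet n D) l) ∧
        ((lowSet n D).ncard : ℝ) ≤ (n : ℝ) ^ ((1 : ℝ) / 3)))
      Filter.atTop (nhds 1) := by
  have heq : (fun n : ℕ => dnpProb n (7 * Real.log n / (8 * n)) (fun D : Finset (Eg n) =>
        (∀ l : List (Fin n), ¬ IsSPath D (lowSet n D) l) ∧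
        (∀ l : List (Fin n), ¬ IsSCycle D (lowSet n D) l) ∧
        ((lowSet n D).ncard : ℝ) ≤ (n : ℝ) ^ ((1 : ℝ) / 3)))
      = fun n : ℕ => 1 - Fail n := by
    funext n
    exact dnp_compl (GoodP n)
  rw [heq]
  have hG : Filter.Tendsto (fun nn : ℕ =>
      256 * (Real.log nn) ^ 4 * ((nn:ℝ) * ((nn:ℝ) ^ (-(27/40 : ℝ))) ^ 2)
      + (4 * (Real.log nn) ^ 2 * (nn:ℝ) ^ (-(27/40 : ℝ))
        + 256 * (Real.log nn) ^ 4 * (nn:ℝ) ^ (-(27/40 : ℝ)))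
      + 2 * (nn:ℝ) ^ ((2:ℝ)/3) * (nn:ℝ) ^ (-(27/40 : ℝ))) Filter.atTop (nhds 0) := by
    have t2 : Filter.Tendsto (fun nn : ℕ =>
        256 * ((Real.log nn) ^ 4 * (nn:ℝ) ^ (-(7/20 : ℝ)))) Filter.atTop (nhds 0) := by
      simpa using (tendsto_log_pow_rpow 4 (7/20) (by norm_num)).const_mul (256:ℝ)
    have t4 : Filter.Tendsto (fun nn : ℕ =>
        4 * ((Real.log nn) ^ 2 * (nn:ℝ) ^ (-(27/40 : ℝ)))) Filter.atTop (nhds 0) := by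
      simpa using (tendsto_log_pow_rpow 2 (27/40) (by norm_num)).const_mul (4:ℝ)
    have t3 : Filter.Tendsto (fun nn : ℕ =>
        256 * ((Real.log nn) ^ 4 * (nn:ℝ) ^ (-(27/40 : ℝ)))) Filter.atTop (nhds 0) := by
      simpa using (tendsto_log_pow_rpow 4 (27/40) (by norm_num)).const_mul (256:ℝ)
    have t1 : Filter.Tendsto (fun nn : ℕ =>
        2 * ((Real.log nn) ^ 0 * (nn:ℝ) ^ (-(1/120 : ℝ)))) Filter.atTop (nhds 0) := by
      simpa using (tendsto_log_pow_rpow 0 (1/120) (by norm_num)).const_mul (2:ℝ)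
    have hall := (t2.add (t4.add t3)).add t1
    rw [show (0:ℝ) + (0 + 0) + 0 = 0 from by ring] at hall
    refine Filter.Tendsto.congr' ?_ hall
    filter_upwards [Filter.eventually_ge_atTop (1:ℕ)] with nn hnn
    have hn0 : (0:ℝ) < nn := by exact_mod_cast hnn
    have e1 : ((nn:ℝ) ^ (-(27/40 : ℝ))) ^ 2 = (nn:ℝ) ^ (-(27/20 : ℝ)) := by
      rw [← Real.rpow_natCast ((nn:ℝ) ^ (-(27/40 : ℝ))) 2, ← Real.rpow_mul hn0.le]
      norm_num
    have e2 : (nn:ℝ) * (nn:ℝ) ^ (-(27/20 : ℝ)) = (nn:ℝ) ^ (-(7/20 : ℝ)) := by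
      have h := Real.rpow_add hn0 1 (-(27/20 : ℝ))
      rw [Real.rpow_one] at h
      rw [← h]
      norm_num
    have e3 : 2 * (nn:ℝ) ^ ((2:ℝ)/3) * (nn:ℝ) ^ (-(27/40 : ℝ))
        = 2 * (nn:ℝ) ^ (-(1/120 : ℝ)) := by
      rw [mul_assoc, ← Real.rpow_add hn0]
      norm_num
    symm
    rw [e1, e2, e3, pow_zero]
    ring
  have hF : Filter.Tendsto Fail Filter.atTop (nhds 0) := by
    have h30 : ∀ᶠ nn : ℕ in Filter.atTop, (30400:ℝ) ≤ Real.log nn := by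
      have hcomp : Filter.Tendsto (fun nn : ℕ => Real.log nn) Filter.atTop Filter.atTop :=
        Real.tendsto_log_atTop.comp tendsto_natCast_atTop_atTop
      exact hcomp.eventually_ge_atTop 30400
    refine squeeze_zero' ?_ ?_ hG
    · exact Filter.Eventually.of_forall fun nn => dnp_nonneg (pn_nonneg nn) (pn_le_one nn) _
    · filter_upwards [Filter.eventually_ge_atTop (10 ^ 6 : ℕ), h30] with nn h1 h2
      exact Fail_le nn h1 h2
  simpa using tendsto_const_nhds.sub hF
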